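/- arXiv:1307.0728 — 3 statements merged into one kernel-verified Lean document; each statement's English description precedes it below -/
import Mathlib

section
/- Let k be a positive integer and let G be a locally finite k-connected simple graph. Then G is k-padded at infinity, i.e., every end of G is k-padded. -/
open Set

variable {V : Type*}

/-- The edge set of a cycle of `G` (a finite circuit). -/
def IsCircuit (G : SimpleGraph V) (C : Set (Sym2 V)) : Prop :=
  ∃ (v : V) (w : G.Walk v v), w.IsCycle ∧ C = {e | e ∈ w.edges}

/-- The cut `E(A, V∖A)`: edges of `G` with exactly one endvertex in `A`. -/
def cutEdges (G : SimpleGraph V) (A : Set V) : Set (Sym2 V) :=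
  {e | ∃ x y, G.Adj x y ∧ x ∈ A ∧ y ∉ A ∧ e = s(x, y)}

/-- `C` is a cut of `G`. -/
def IsCut (G : SimpleGraph V) (C : Set (Sym2 V)) : Prop :=
  ∃ A : Set V, C = cutEdges G A

/-- A bond is a ⊆-minimal nonempty cut. -/
def IsBond (G : SimpleGraph V) (B : Set (Sym2 V)) : Prop :=
  IsCut G B ∧ B ≠ ∅ ∧ ∀ C, IsCut G C → C ≠ ∅ → C ⊆ B → C = B

/-- Two edge sets are orthogonal: their intersection is finite and of even cardinality. -/
def EvenInter (D F : Set (Sym2 V)) : Prop :=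
  (D ∩ F).Finite ∧ Even (D ∩ F).ncard

/-- A ray in `G`. -/
def IsRay (G : SimpleGraph V) (R : ℕ → V) : Prop :=
  Function.Injective R ∧ ∀ n, G.Adj (R n) (R (n + 1))

/-- A double ray in `G`. -/
def IsDoubleRay (G : SimpleGraph V) (R : ℤ → V) : Prop :=
  Function.Injective R ∧ ∀ n, G.Adj (R n) (R (n + 1))

/-- The edge set of a double ray. -/
def doubleRayEdges (R : ℤ → V) : Set (Sym2 V) :=
  {e | ∃ n : ℤ, e = s(R n, R (n + 1))}

/-- `D` is the edge set of some double ray of `G`. -/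
def IsDoubleRayEdgeSet (G : SimpleGraph V) (D : Set (Sym2 V)) : Prop :=
  ∃ R : ℤ → V, IsDoubleRay G R ∧ D = doubleRayEdges R

/-- `a` and `b` are joined by a walk of `G` all of whose vertices avoid `S`,
i.e. they lie in a common component of `G − S`. -/
def ConnAvoiding (G : SimpleGraph V) (S : Set V) (a b : V) : Prop :=
  ∃ w : G.Walk a b, ∀ x ∈ w.support, x ∉ S

/-- `v` lies in `C(S,R)`, the component of `G − S` containing a tail of the ray `R`. -/
def InC (G : SimpleGraph V) (S : Set V) (R : ℕ → V) (v : V) : Prop :=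
  ∃ m : ℕ, (∀ n, R (m + n) ∉ S) ∧ ConnAvoiding G S v (R m)

/-- The rays `R` and `R'` are equivalent (lie in the same end): for every finite `S`
some component of `G − S` contains a tail of both. -/
def RayEquiv (G : SimpleGraph V) (R R' : ℕ → V) : Prop :=
  ∀ S : Set V, S.Finite → ∃ m m', (∀ n, R (m + n) ∉ S) ∧ (∀ n, R' (m' + n) ∉ S) ∧
    ConnAvoiding G S (R m) (R' m')

/-- The sequence `v` of vertices converges to the end of the ray `R`: for every finite `S`
all but finitely many `v i` lie in `C(S,R)`. -/
def ConvergesTo (G : SimpleGraph V) (R : ℕ → V) (v : ℕ → V) : Prop :=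
  ∀ S : Set V, S.Finite → {i : ℕ | ¬ InC G S R (v i)}.Finite

/-- `F` is the vertex set of a `k`-fan from `u` to `Y`: a union of `k` paths starting
at `u`, pairwise sharing no vertex other than `u`, ending in `k` distinct vertices of `Y`. -/
def IsFan (G : SimpleGraph V) (k : ℕ) (u : V) (Y : Set V) (F : Set V) : Prop :=
  ∃ (ends : Fin k → V) (P : ∀ i, G.Walk u (ends i)),
    (∀ i, (P i).IsPath) ∧ (∀ i, ends i ∈ Y) ∧ Function.Injective ends ∧
    (∀ i j, i ≠ j → ∀ x, x ∈ (P i).support → x ∈ (P j).support → x = u) ∧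
    F = ⋃ i, {x | x ∈ (P i).support}

/-- `L` is the vertex set of a `k`-linkage from `x` to `y`: a union of `k` paths from
`x` to `y` pairwise sharing no vertices other than `x` and `y`. -/
def IsLinkage (G : SimpleGraph V) (k : ℕ) (x y : V) (L : Set V) : Prop :=
  ∃ P : Fin k → G.Walk x y,
    (∀ i, (P i).IsPath) ∧ Function.Injective P ∧
    (∀ i j, i ≠ j → ∀ z, z ∈ (P i).support → z ∈ (P j).support → z = x ∨ z = y) ∧
    L = ⋃ i, {z | z ∈ (P i).support}

/-- The end represented by the ray `R` is `k`-padded: for every equivalent ray `R'`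
there is a finite `S` such that every vertex of `C(S,R')` admits a `k`-fan to the
image of `R'` in `G`. -/
def IsPaddedEnd (G : SimpleGraph V) (k : ℕ) (R : ℕ → V) : Prop :=
  ∀ R' : ℕ → V, IsRay G R' → RayEquiv G R R' →
    ∃ S : Set V, S.Finite ∧ ∀ v, InC G S R' v → ∃ F, IsFan G k v (Set.range R') F

/-- `G` is `k`-padded at infinity: every end of `G` is `k`-padded. -/
def PaddedAtInfinity (G : SimpleGraph V) (k : ℕ) : Prop :=
  ∀ R : ℕ → V, IsRay G R → IsPaddedEnd G k R

/-- `G` is `k`-connected: it has more than `k` vertices and deleting fewer than `k`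
vertices leaves it connected. -/
def KConnected (G : SimpleGraph V) (k : ℕ) : Prop :=
  (k : ℕ∞) < (Set.univ : Set V).encard ∧
  ∀ S : Set V, S.Finite → S.ncard < k → (G.induce (Sᶜ : Set V)).Connected

/-- The algebraic cycle space: edge sets meeting every vertex in an even number of edges. -/
def CAlg (G : SimpleGraph V) : Set (Set (Sym2 V)) :=
  {D | D ⊆ G.edgeSet ∧ ∀ v : V, {e ∈ D | v ∈ e}.Finite ∧ Even {e ∈ D | v ∈ e}.ncard}

/-- The finite-cycle space: symmetric-difference sums of finitely many finite circuits. -/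
def CFin (G : SimpleGraph V) : Set (Set (Sym2 V)) :=
  {D | ∃ l : List (Set (Sym2 V)), (∀ C ∈ l, IsCircuit G C) ∧ D = l.foldr symmDiff ∅}

namespace StFlow

variable {V : Type*}

/-- Node type for vertex-split digraph: `some (v, false)` is the in-node,
`some (v, true)` the out-node, `none` the super-sink. -/
abbrev Nd (V : Type*) := Option (V × Bool)

def vi (v : V) : Nd V := some (v, false)
def vo (v : V) : Nd V := some (v, true)

@[simp] lemma vi_inj {a b : V} : vi a = vi b ↔ a = b := by simp [vi]
@[simp] lemma vo_inj {a b : V} : vo a = vo b ↔ a = b := by simp [vo]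
@[simp] lemma vi_ne_vo {a b : V} : vi a ≠ vo b := by simp [vi, vo]
@[simp] lemma vo_ne_vi {a b : V} : vo a ≠ vi b := by simp [vi, vo]
@[simp] lemma vi_ne_none {a : V} : vi a ≠ (none : Nd V) := by simp [vi]
@[simp] lemma vo_ne_none {a : V} : vo a ≠ (none : Nd V) := by simp [vo]
@[simp] lemma none_ne_vi {a : V} : (none : Nd V) ≠ vi a := by simp [vi]
@[simp] lemma none_ne_vo {a : V} : (none : Nd V) ≠ vo a := by simp [vo]

variable (G : SimpleGraph V) (u : V) (Y : Set V)

/-- Valid arcs of the network. -/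
def Vld (p q : Nd V) : Prop :=
  (∃ v : V, p = vi v ∧ q = vo v) ∨
  (∃ v w : V, G.Adj v w ∧ p = vo v ∧ q = vi w) ∨
  (∃ v : V, v ∈ Y ∧ v ≠ u ∧ p = vo v ∧ q = none)

variable {G u Y}

lemma vld_out_vi {v : V} {q : Nd V} (h : Vld G u Y (vi v) q) : q = vo v := by
  rcases h with ⟨w, hw, hq⟩ | ⟨a, b, _, ha, _⟩ | ⟨a, _, _, ha, _⟩
  · rw [vi_inj] at hw; subst hw; exact hq
  · exact absurd ha.symm vo_ne_vi
  · exact absurd ha.symm vo_ne_vi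

lemma vld_into_vo {v : V} {p : Nd V} (h : Vld G u Y p (vo v)) : p = vi v := by
  rcases h with ⟨w, hp, hq⟩ | ⟨a, b, _, _, hb⟩ | ⟨a, _, _, _, hq⟩
  · rw [vo_inj] at hq; subst hq; exact hp
  · exact absurd hb.symm vi_ne_vo
  · exact absurd hq.symm none_ne_vo

lemma vld_into_vi {v : V} {p : Nd V} (h : Vld G u Y p (vi v)) :
    ∃ w : V, p = vo w ∧ G.Adj w v := by
  rcases h with ⟨w, _, hq⟩ | ⟨a, b, hab, ha, hb⟩ | ⟨a, _, _, _, hq⟩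
  · exact absurd hq vi_ne_vo
  · rw [vi_inj] at hb; subst hb; exact ⟨a, ha, hab⟩
  · exact absurd hq vi_ne_none

lemma vld_into_none {p : Nd V} (h : Vld G u Y p none) :
    ∃ w : V, p = vo w ∧ w ∈ Y ∧ w ≠ u := by
  rcases h with ⟨w, _, hq⟩ | ⟨a, b, _, _, hb⟩ | ⟨a, h1, h2, hp, _⟩
  · exact absurd hq none_ne_vo
  · exact absurd hb none_ne_vi
  · exact ⟨a, hp, h1, h2⟩

lemma vld_not_from_none {q : Nd V} (h : Vld G u Y none q) : False := by
  rcases h with ⟨w, hp, _⟩ | ⟨a, b, _, ha, _⟩ | ⟨a, _, _, hp, _⟩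
  · exact none_ne_vi hp
  · exact none_ne_vo ha
  · exact none_ne_vo hp

lemma vld_vertex (v : V) : Vld G u Y (vi v) (vo v) := Or.inl ⟨v, rfl, rfl⟩

lemma vld_edge {v w : V} (h : G.Adj v w) : Vld G u Y (vo v) (vi w) :=
  Or.inr (Or.inl ⟨v, w, h, rfl, rfl⟩)

lemma vld_sink {v : V} (h1 : v ∈ Y) (h2 : v ≠ u) : Vld G u Y (vo v) none :=
  Or.inr (Or.inr ⟨v, h1, h2, rfl, rfl⟩)

lemma vld_irrefl {p : Nd V} (h : Vld G u Y p p) : False := by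
  rcases h with ⟨w, hp, hq⟩ | ⟨a, b, hab, ha, hb⟩ | ⟨a, _, _, hp, hq⟩
  · subst hp; exact vi_ne_vo hq
  · subst ha; exact vo_ne_vi hb
  · subst hp; exact vo_ne_none hq


/-- Local conservation conditions at vertex `v`. -/
def Cv (u : V) (F : Set (Nd V × Nd V)) (v : V) : Prop :=
  (∀ a ∈ F, a.2 = vi v → (vi v, vo v) ∈ F) ∧
  ((vi v, vo v) ∈ F → ∃ a ∈ F, a.2 = vi v) ∧
  (∀ a ∈ F, ∀ b ∈ F, a.2 = vi v → b.2 = vi v → a = b) ∧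
  (v ≠ u →
    (∀ a ∈ F, a.1 = vo v → (vi v, vo v) ∈ F) ∧
    ((vi v, vo v) ∈ F → ∃ a ∈ F, a.1 = vo v) ∧
    (∀ a ∈ F, ∀ b ∈ F, a.1 = vo v → b.1 = vo v → a = b))

/-- Basic well-formedness of an arc set. -/
def Gd (G : SimpleGraph V) (u : V) (Y : Set V) (F : Set (Nd V × Nd V)) : Prop :=
  F.Finite ∧ (∀ a ∈ F, Vld G u Y a.1 a.2) ∧ (vi u, vo u) ∉ F

/-- A unit flow from `u` towards `Y`. -/
def Flow (G : SimpleGraph V) (u : V) (Y : Set V) (F : Set (Nd V × Nd V)) : Prop :=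
  Gd G u Y F ∧ ∀ v, Cv u F v

def stp (F : Set (Nd V × Nd V)) (p q : Nd V) : Prop := (p, q) ∈ F

def rch (F : Set (Nd V × Nd V)) : Nd V → Nd V → Prop := Relation.ReflTransGen (stp F)

section Basic

variable {F : Set (Nd V × Nd V)}

lemma arc_fst_ne_none (hGd : Gd G u Y F) {a : Nd V × Nd V} (ha : a ∈ F) : a.1 ≠ none :=
  fun h => vld_not_from_none (h ▸ hGd.2.1 a ha)

lemma no_into_source (hGd : Gd G u Y F) {p : Nd V} (h : (p, vo u) ∈ F) : False := by
  have hv := vld_into_vo (hGd.2.1 _ h)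
  simp only at hv
  subst hv
  exact hGd.2.2 h

lemma mem_ne_self (hGd : Gd G u Y F) {p : Nd V} (h : (p, p) ∈ F) : False :=
  vld_irrefl (hGd.2.1 _ h)

lemma in_unique (hF : Flow G u Y F) {n : Nd V} (hn : n ≠ none)
    {a b : Nd V × Nd V} (ha : a ∈ F) (hb : b ∈ F) (h2a : a.2 = n) (h2b : b.2 = n) : a = b := by
  match n with
  | none => exact absurd rfl hn
  | some (v, false) => exact (hF.2 v).2.2.1 a ha b hb h2a h2b
  | some (v, true) =>
    have hva : a.1 = vi v := vld_into_vo (h2a ▸ hF.1.2.1 a ha)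
    have hvb : b.1 = vi v := vld_into_vo (h2b ▸ hF.1.2.1 b hb)
    have : a = (a.1, a.2) := rfl
    rw [Prod.ext_iff]
    exact ⟨hva.trans hvb.symm, h2a.trans h2b.symm⟩

lemma out_unique (hF : Flow G u Y F) {n : Nd V} (hn : n ≠ vo u)
    {a b : Nd V × Nd V} (ha : a ∈ F) (hb : b ∈ F) (h1a : a.1 = n) (h1b : b.1 = n) : a = b := by
  match n with
  | none => exact absurd (h1a ▸ hF.1.2.1 a ha) vld_not_from_none
  | some (v, false) =>
    have hva : a.2 = vo v := vld_out_vi (h1a ▸ hF.1.2.1 a ha)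
    have hvb : b.2 = vo v := vld_out_vi (h1b ▸ hF.1.2.1 b hb)
    rw [Prod.ext_iff]
    exact ⟨h1a.trans h1b.symm, hva.trans hvb.symm⟩
  | some (v, true) =>
    have hvu : v ≠ u := fun h => hn (by rw [h]; rfl)
    exact ((hF.2 v).2.2.2 hvu).2.2 a ha b hb h1a h1b

/-- No directed cycle through a node reachable from the source. -/
lemma nc (hF : Flow G u Y F) {n m : Nd V} (hrn : rch F (vo u) n)
    (hstep : (n, m) ∈ F) (hback : rch F m n) : False := by
  have key : ∀ p : Nd V, Relation.ReflTransGen (Function.swap (stp F)) p (vo u) →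
      ∀ q, (p, q) ∈ F → rch F q p → False := by
    intro p hp
    induction hp using Relation.ReflTransGen.head_induction_on with
    | refl =>
      intro q hsq hr
      rcases Relation.ReflTransGen.cases_tail hr with h | ⟨c, _, hc⟩
      · exact mem_ne_self hF.1 (by rw [h] at hsq; exact hsq)
      · exact no_into_source hF.1 hc
    | @head p' c h' hrest ih =>
      intro q hs hr
      rcases Relation.ReflTransGen.cases_tail hr with h | ⟨d, hqd, hdp⟩
      · exact mem_ne_self hF.1 (h ▸ hs)
      · have hne : p' ≠ none := by
          intro h0; exact vld_not_from_none (h0 ▸ hF.1.2.1 _ hs)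
        have heq : (d, p') = (c, p') :=
          in_unique hF hne hdp h' rfl rfl
        have hd : d = c := congrArg Prod.fst heq
        exact ih p' h' (Relation.ReflTransGen.head hs (hd ▸ hqd))
  exact key n (Relation.reflTransGen_swap.mpr hrn) m hstep hback

/-- Reaches from a common (non-source) node are linearly ordered. -/
lemma lin (hF : Flow G u Y F) {m a b : Nd V} (hm : m ≠ vo u)
    (h1 : rch F m a) (h2 : rch F m b) : rch F a b ∨ rch F b a := by
  induction h1 using Relation.ReflTransGen.head_induction_on with
  | refl => exact Or.inl h2
  | @head m' c h' hrest ih =>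
    rcases Relation.ReflTransGen.cases_head h2 with h | ⟨d, hd, hdb⟩
    · exact Or.inr (h ▸ Relation.ReflTransGen.head h' hrest)
    · have heq : (m', c) = (m', d) := out_unique hF hm h' hd rfl rfl
      have hdc : c = d := congrArg Prod.snd heq
      have hc_ne : c ≠ vo u := fun h0 => no_into_source hF.1 (h0 ▸ h')
      exact ih hc_ne (hdc ▸ hdb)

end Basic


section Sepcore

variable {F : Set (Nd V × Nd V)}

/-- If the in-node of a used vertex is not reachable from the source,
then it lies on a directed cycle. -/
lemma sepcore (hF : Flow G u Y F) {v : V} (hv : (vi v, vo v) ∈ F)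
    (hnr : ¬ rch F (vo u) (vi v)) : rch F (vo v) (vi v) := by
  classical
  set W : Set (Nd V) := {n : Nd V | rch F n (vi v)} with hW_def
  have hinarc : ∀ n ∈ W, ∃ a ∈ F, a.2 = n := by
    intro n hn
    rcases Relation.ReflTransGen.cases_head hn with h | ⟨c, hc, _⟩
    · subst h
      exact (hF.2 v).2.1 hv
    · match n, hc with
      | none, hc => exact absurd (hF.1.2.1 _ hc) vld_not_from_none
      | some (z, false), hc =>
        have h2 : c = vo z := vld_out_vi (hF.1.2.1 _ hc)
        subst h2
        exact (hF.2 z).2.1 hc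
      | some (z, true), hc =>
        have hzu : z ≠ u := by
          rintro rfl
          exact hnr hn
        exact ⟨(vi z, vo z), ((hF.2 z).2.2.2 hzu).1 _ hc rfl, rfl⟩
  let g : Nd V → Nd V := fun n => if h : ∃ a ∈ F, a.2 = n then (Classical.choose h).1 else n
  have hg : ∀ n ∈ W, ((g n, n) ∈ F ∧ g n ∈ W) := by
    intro n hn
    have h := hinarc n hn
    have hspec := Classical.choose_spec h
    have hgn : g n = (Classical.choose h).1 := dif_pos h
    have harc : (g n, n) ∈ F := by
      have h1 : ((Classical.choose h).1, (Classical.choose h).2) ∈ F := by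
        rw [Prod.mk.eta]; exact hspec.1
      rw [hspec.2] at h1
      rw [hgn]
      exact h1
    exact ⟨harc, Relation.ReflTransGen.head harc hn⟩
  let sq : ℕ → Nd V := fun i => g^[i] (vi v)
  have hsq0 : sq 0 = vi v := rfl
  have hWv : (vi v : Nd V) ∈ W := Relation.ReflTransGen.refl
  have hWsq : ∀ i, sq i ∈ W := by
    intro i
    induction i with
    | zero => exact hWv
    | succ i ih =>
      have : sq (i + 1) = g (sq i) := Function.iterate_succ_apply' g i (vi v)
      rw [this]
      exact (hg _ ih).2
  have hstep : ∀ i, (sq (i + 1), sq i) ∈ F := by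
    intro i
    have : sq (i + 1) = g (sq i) := Function.iterate_succ_apply' g i (vi v)
    rw [this]
    exact (hg _ (hWsq i)).1
  have hWfin : W.Finite := by
    apply Set.Finite.subset ((hF.1.1.image Prod.fst).insert (vi v))
    intro n hn
    rcases Relation.ReflTransGen.cases_head hn with h | ⟨c, hc, _⟩
    · exact Or.inl h
    · exact Or.inr ⟨(n, c), hc, rfl⟩
  have hrep : ∃ i j : ℕ, i ≠ j ∧ sq i = sq j := by
    haveI := hWfin.to_subtype
    obtain ⟨i, j, hij, hval⟩ :=
      Finite.exists_ne_map_eq_of_infinite (fun i : ℕ => (⟨sq i, hWsq i⟩ : W))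
    exact ⟨i, j, hij, congrArg Subtype.val hval⟩
  have hpush : ∀ i j, i ≤ j → sq i = sq j → sq 0 = sq (j - i) := by
    intro i
    induction i with
    | zero => intro j _ h; simpa using h
    | succ i ih =>
      intro j hij heq
      cases j with
      | zero => omega
      | succ j' =>
        have hne : sq (i + 1) ≠ vo u := by
          intro h0
          exact hnr (h0 ▸ hWsq (i + 1))
        have hb2 : (sq (i + 1), sq j') ∈ F := by rw [heq]; exact hstep j'
        have harcs : (sq (i + 1), sq i) = (sq (i + 1), sq j') :=
          out_unique hF hne (hstep i) hb2 rfl rfl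
        have h2 : sq i = sq j' := congrArg Prod.snd harcs
        have := ih j' (Nat.succ_le_succ_iff.mp hij) h2
        simpa [Nat.succ_sub_succ] using this
  obtain ⟨i, j, hij, hva⟩ := hrep
  rcases Nat.lt_or_ge i j with hlt | hge
  · have h0 : sq 0 = sq (j - i) := hpush i j (le_of_lt hlt) hva
    have hd : 1 ≤ j - i := by omega
    have harc : (sq (j - i), sq (j - i - 1)) ∈ F := by
      have h1 := hstep (j - i - 1)
      have hco : j - i - 1 + 1 = j - i := by omega
      rwa [hco] at h1
    rw [← h0, hsq0] at harc
    have hout : sq (j - i - 1) = vo v := vld_out_vi (hF.1.2.1 _ harc)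
    have := hWsq (j - i - 1)
    rwa [hout] at this
  · have hgt : j < i := by omega
    have h0 : sq 0 = sq (i - j) := hpush j i (le_of_lt hgt) hva.symm
    have hd : 1 ≤ i - j := by omega
    have harc : (sq (i - j), sq (i - j - 1)) ∈ F := by
      have h1 := hstep (i - j - 1)
      have hco : i - j - 1 + 1 = i - j := by omega
      rwa [hco] at h1
    rw [← h0, hsq0] at harc
    have hout : sq (i - j - 1) = vo v := vld_out_vi (hF.1.2.1 _ harc)
    have := hWsq (i - j - 1)
    rwa [hout] at this

end Sepcore


section Ext

variable {F : Set (Nd V × Nd V)}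

/-- Comparability of two sources reaching a common non-sink node. -/
lemma cmpr (hF : Flow G u Y F) {n a b : Nd V} (hn : n ≠ none)
    (ha : rch F a n) (hb : rch F b n) : rch F a b ∨ rch F b a := by
  have key : ∀ n' : Nd V, Relation.ReflTransGen (Function.swap (stp F)) n' a →
      n' ≠ none → ∀ b', rch F b' n' → rch F a b' ∨ rch F b' a := by
    intro n' hn'
    induction hn' using Relation.ReflTransGen.head_induction_on with
    | refl => intro _ b' hb'; exact Or.inr hb'
    | @head m c h' hrest ih =>
      intro hm b' hb'
      rcases Relation.ReflTransGen.cases_tail hb' with h | ⟨d, hbd, hdn⟩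
      · refine Or.inl ?_
        rw [← h]
        exact Relation.ReflTransGen.tail (Relation.reflTransGen_swap.mp hrest) h'
      · have heq : (d, m) = (c, m) := in_unique hF hm hdn h' rfl rfl
        have hdc : d = c := congrArg Prod.fst heq
        have hc_ne : c ≠ none := arc_fst_ne_none hF.1 h'
        exact ih hc_ne b' (hdc ▸ hbd)
  exact key n (Relation.reflTransGen_swap.mpr ha) hn b hb

lemma rset_finite (hF : Flow G u Y F) (w : V) :
    {x : V | rch F (vi w) (vi x)}.Finite := by
  apply Set.Finite.subset
    (((hF.1.1.image (fun a : Nd V × Nd V => ((a.2.getD (w, false)).1))).insert w))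
  intro x hx
  rcases Relation.ReflTransGen.cases_tail hx with h | ⟨c, _, hcx⟩
  · exact Or.inl (vi_inj.mp h)
  · exact Or.inr ⟨(c, vi x), hcx, rfl⟩

/-- Extraction of a path from a flow, following arcs from a used vertex. -/
lemma ext_walk (hF : Flow G u Y F) :
    ∀ (n : ℕ) (w : V), w ≠ u → (vi w, vo w) ∈ F → rch F (vo u) (vi w) →
      {x : V | rch F (vi w) (vi x)}.ncard ≤ n →
      ∃ (y : V) (P : G.Walk w y), P.IsPath ∧ y ∈ Y ∧ y ≠ u ∧
        ∀ x ∈ P.support, rch F (vi w) (vi x) := by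
  intro n
  induction n with
  | zero =>
    intro w hwu hv hru hcard
    exfalso
    have hpos : 0 < {x : V | rch F (vi w) (vi x)}.ncard := by
      rw [Set.ncard_pos (rset_finite hF w)]
      exact ⟨w, Relation.ReflTransGen.refl⟩
    omega
  | succ n ih =>
    intro w hwu hv hru hcard
    obtain ⟨a, ha, h1a⟩ := ((hF.2 w).2.2.2 hwu).2.1 hv
    have hvld := hF.1.2.1 a ha
    rw [h1a] at hvld
    rcases hvld with ⟨z, hz1, hz2⟩ | ⟨z, z', hadj, hz1, hz2⟩ | ⟨z, hzY, hzu, hz1, hz2⟩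
    · exact absurd hz1.symm vi_ne_vo
    · -- edge arc to vi z'
      have hzw : z = w := vo_inj.mp hz1.symm
      subst hzw
      have harc : (vo z, vi z') ∈ F := by
        have : a = (vo z, vi z') := by
          rw [Prod.ext_iff]; exact ⟨h1a.trans hz1, hz2⟩
        rwa [this] at ha
      have hvz' : (vi z', vo z') ∈ F := (hF.2 z').1 _ harc rfl
      have hz'u : z' ≠ u := by
        rintro rfl
        exact hF.1.2.2 hvz'
      have hrz' : rch F (vo u) (vi z') :=
        Relation.ReflTransGen.tail (Relation.ReflTransGen.tail hru hv) harc
      have hnotback : ¬ rch F (vi z') (vi z) := by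
        intro hbad
        exact nc hF hru hv (Relation.ReflTransGen.head harc hbad)
      have hss : {x : V | rch F (vi z') (vi x)} ⊂ {x : V | rch F (vi z) (vi x)} := by
        constructor
        · intro x hx
          exact Relation.ReflTransGen.trans
            (Relation.ReflTransGen.head hv (Relation.ReflTransGen.single harc)) hx
        · intro hsub
          exact hnotback (hsub (Relation.ReflTransGen.refl : rch F (vi z) (vi z)))
      have hlt : {x : V | rch F (vi z') (vi x)}.ncard < {x : V | rch F (vi z) (vi x)}.ncard :=
        Set.ncard_lt_ncard hss (rset_finite hF z)
      obtain ⟨y, Q, hQpath, hyY, hyu, hQsupp⟩ :=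
        ih z' hz'u hvz' hrz' (by omega)
      refine ⟨y, SimpleGraph.Walk.cons hadj Q, ?_, hyY, hyu, ?_⟩
      · rw [SimpleGraph.Walk.cons_isPath_iff]
        refine ⟨hQpath, fun hmem => ?_⟩
        exact hnotback (hQsupp _ hmem)
      · intro x hx
        rw [SimpleGraph.Walk.support_cons] at hx
        rcases List.mem_cons.mp hx with h | h
        · subst h; exact Relation.ReflTransGen.refl
        · exact Relation.ReflTransGen.trans
            (Relation.ReflTransGen.head hv (Relation.ReflTransGen.single harc)) (hQsupp _ h)
    · -- sink arc
      have hzw : z = w := vo_inj.mp hz1.symm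
      subst hzw
      refine ⟨z, SimpleGraph.Walk.nil, SimpleGraph.Walk.IsPath.nil, hzY, hzu, ?_⟩
      intro x hx
      rw [SimpleGraph.Walk.support_nil] at hx
      rcases List.mem_singleton.mp hx with h
      subst h
      exact Relation.ReflTransGen.refl

end Ext


section Fan

variable {F : Set (Nd V × Nd V)}

lemma reach_vi_ne_u (hF : Flow G u Y F) {w x : V} (hwu : w ≠ u)
    (h : rch F (vi w) (vi x)) : x ≠ u := by
  intro hxu
  rw [hxu] at h
  rcases Relation.ReflTransGen.cases_tail h with h' | ⟨c, _, hc⟩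
  · exact hwu (vi_inj.mp h').symm
  · exact hF.1.2.2 ((hF.2 u).1 _ hc rfl)

lemma fan_of_flow (hF : Flow G u Y F) {m : ℕ}
    (hval : {a : Nd V × Nd V | a ∈ F ∧ a.1 = vo u}.ncard = m) :
    ∃ Fs : Set V, IsFan G m u Y Fs := by
  classical
  set OA : Set (Nd V × Nd V) := {a | a ∈ F ∧ a.1 = vo u} with hOA_def
  have hOAfin : OA.Finite := hF.1.1.subset (fun a ha => ha.1)
  have hcard : hOAfin.toFinset.card = m := by
    rw [← hval, Set.ncard_eq_toFinset_card _ hOAfin]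
  let e := hOAfin.toFinset.equivFinOfCardEq hcard
  have key : ∀ i : Fin m, ∃ w : V, w ≠ u ∧ ((e.symm i : Nd V × Nd V) = (vo u, vi w)) ∧
      G.Adj u w ∧ ∃ (y : V) (P : G.Walk u y), P.IsPath ∧ y ∈ Y ∧ y ≠ u ∧
      ∀ x ∈ P.support, x = u ∨ rch F (vi w) (vi x) := by
    intro i
    have hmem : (e.symm i : Nd V × Nd V) ∈ OA := by
      have := (e.symm i).2
      rwa [Set.Finite.mem_toFinset] at this
    obtain ⟨haF, h1a⟩ := hmem
    have hvld := hF.1.2.1 _ haF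
    rw [h1a] at hvld
    rcases hvld with ⟨z, hz1, _⟩ | ⟨z, z', hadj, hz1, hz2⟩ | ⟨z, hzY, hzu, hz1, _⟩
    · exact absurd hz1.symm vi_ne_vo
    · have hzu : z = u := vo_inj.mp hz1.symm
      subst hzu
      have harceq : (e.symm i : Nd V × Nd V) = (vo z, vi z') := by
        rw [Prod.ext_iff]; exact ⟨h1a.trans hz1, hz2⟩
      have harc : (vo z, vi z') ∈ F := harceq ▸ haF
      have hvz' : (vi z', vo z') ∈ F := (hF.2 z').1 _ harc rfl
      have hz'u : z' ≠ z := by rintro rfl; exact hF.1.2.2 hvz'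
      have hrz' : rch F (vo z) (vi z') := Relation.ReflTransGen.single harc
      obtain ⟨y, Q, hQpath, hyY, hyu, hQsupp⟩ :=
        ext_walk hF ({x : V | rch F (vi z') (vi x)}.ncard) z' hz'u hvz'
          hrz' le_rfl
      refine ⟨z', hz'u, harceq, hadj, y, SimpleGraph.Walk.cons hadj Q, ?_, hyY, hyu, ?_⟩
      · rw [SimpleGraph.Walk.cons_isPath_iff]
        refine ⟨hQpath, fun hmem => ?_⟩
        exact (reach_vi_ne_u hF hz'u (hQsupp _ hmem)) rfl
      · intro x hx
        rw [SimpleGraph.Walk.support_cons] at hx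
        rcases List.mem_cons.mp hx with h | h
        · exact Or.inl h
        · exact Or.inr (hQsupp _ h)
    · -- sink from vo u impossible
      have hzu2 : z = u := vo_inj.mp hz1.symm
      exact absurd hzu2 hzu
  choose w hwu harceq hadj y P hpath hY hyu hsupp using key
  have hdisj0 : ∀ i j : Fin m, i ≠ j → ¬ rch F (vi (w i)) (vi (w j)) := by
    intro i j hij hr
    rcases Relation.ReflTransGen.cases_tail hr with h | ⟨c, hrc, hcn⟩
    · have hww : w j = w i := vi_inj.mp h
      have : (e.symm i : Nd V × Nd V) = (e.symm j : Nd V × Nd V) := by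
        rw [harceq i, harceq j, hww]
      have : e.symm i = e.symm j := Subtype.ext this
      exact hij (e.symm.injective this)
    · have harcj : (vo u, vi (w j)) ∈ F := by
        have := (e.symm j).2
        rw [Set.Finite.mem_toFinset] at this
        exact (harceq j) ▸ this.1
      have heq : (c, vi (w j)) = (vo u, vi (w j)) :=
        in_unique hF vi_ne_none hcn harcj rfl rfl
      have hc : c = vo u := congrArg Prod.fst heq
      subst hc
      rcases Relation.ReflTransGen.cases_tail hrc with h' | ⟨d, _, hd⟩
      · exact vo_ne_vi h' 
      · exact no_into_source hF.1 hd
  have hdisj : ∀ i j : Fin m, i ≠ j → ∀ x : V,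
      rch F (vi (w i)) (vi x) → rch F (vi (w j)) (vi x) → False := by
    intro i j hij x h1 h2
    rcases cmpr hF (vi_ne_none) h1 h2 with h | h
    · exact hdisj0 i j hij h
    · exact hdisj0 j i (Ne.symm hij) h
  refine ⟨⋃ i, {x | x ∈ (P i).support}, y, P, hpath, hY, ?_, ?_, rfl⟩
  · intro i j hyij
    by_contra hij
    have h1 : rch F (vi (w i)) (vi (y i)) := by
      rcases hsupp i (y i) (P i).end_mem_support with h | h
      · exact absurd h (hyu i)
      · exact h
    have h2 : rch F (vi (w j)) (vi (y i)) := by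
      have hmem : y i ∈ (P j).support := by rw [hyij]; exact (P j).end_mem_support
      rcases hsupp j (y i) hmem with h | h
      · exact absurd h (hyu i)
      · exact h
    exact hdisj i j hij _ h1 h2
  · intro i j hij x hxi hxj
    rcases hsupp i x hxi with h | h1
    · exact h
    rcases hsupp j x hxj with h | h2
    · exact h
    exact absurd (hdisj i j hij x h1 h2) not_false

end Fan


section Residual

variable (G u Y) in
/-- Residual relation of a flow. -/
def Rd (F0 : Set (Nd V × Nd V)) (p q : Nd V) : Prop :=
  (Vld G u Y p q ∧ (p, q) ∉ F0) ∨ (q, p) ∈ F0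

variable (G u Y) in
/-- Residual-reachable nodes. -/
def Zs (F0 : Set (Nd V × Nd V)) : Set (Nd V) :=
  {n | Relation.ReflTransGen (Rd G u Y F0) (vo u) n}

variable {F0 : Set (Nd V × Nd V)}

lemma zs_source : vo u ∈ Zs G u Y F0 := Relation.ReflTransGen.refl

lemma zs_fwd {p q : Nd V} (hp : p ∈ Zs G u Y F0) (hv : Vld G u Y p q)
    (hn : (p, q) ∉ F0) : q ∈ Zs G u Y F0 :=
  Relation.ReflTransGen.tail hp (Or.inl ⟨hv, hn⟩)

lemma zs_back_step {p q : Nd V} (h : (p, q) ∈ F0) (hq : q ∈ Zs G u Y F0) :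
    p ∈ Zs G u Y F0 :=
  Relation.ReflTransGen.tail hq (Or.inr h)

lemma zs_back {m n : Nd V} (h : rch F0 m n) (hn : n ∈ Zs G u Y F0) :
    m ∈ Zs G u Y F0 := by
  induction h using Relation.ReflTransGen.head_induction_on with
  | refl => exact hn
  | @head m' c h' _ ih => exact zs_back_step h' ih

lemma sink_ne_u (hF : Flow G u Y F0) {v : V} (h : (vo v, none) ∈ F0) : v ≠ u := by
  obtain ⟨w, hw1, _, hwu⟩ := vld_into_none (hF.1.2.1 _ h)
  intro hvu
  exact hwu (by rw [← vo_inj.mp hw1, hvu])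

/-- If the flow is not maximal, the sink is residual-reachable. -/
lemma t_reachable (hF : Flow G u Y F0) {k : ℕ}
    (hval : {a : Nd V × Nd V | a ∈ F0 ∧ a.1 = vo u}.ncard < k)
    (hsep : ∀ S : Set V, S.Finite → S.ncard < k → u ∉ S →
      ∃ y ∈ Y, y ∉ S ∧ y ≠ u ∧ ∃ w : G.Walk u y, ∀ x ∈ w.support, x ∉ S) :
    (none : Nd V) ∈ Zs G u Y F0 := by
  classical
  by_contra hT
  set S : Set V := {v | (vi v ∈ Zs G u Y F0 ∧ vo v ∉ Zs G u Y F0) ∨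
    (vi v ∉ Zs G u Y F0 ∧ ∃ x, vo x ∈ Zs G u Y F0 ∧ (vo x, vi v) ∈ F0) ∨
    (vo v ∈ Zs G u Y F0 ∧ (vo v, none) ∈ F0)} with hS_def
  have hSvert : ∀ v ∈ S, (vi v, vo v) ∈ F0 := by
    intro v hv
    rcases hv with ⟨h1, h2⟩ | ⟨_, x, _, harc⟩ | ⟨_, hsink⟩
    · by_contra hnot
      exact h2 (zs_fwd h1 (vld_vertex v) hnot)
    · exact (hF.2 v).1 _ harc rfl
    · have hvu : v ≠ u := sink_ne_u hF hsink
      exact ((hF.2 v).2.2.2 hvu).1 _ hsink rfl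
  have hSu : u ∉ S := by
    intro hu
    rcases hu with ⟨_, h2⟩ | ⟨_, x, _, harc⟩ | ⟨_, hsink⟩
    · exact h2 zs_source
    · exact hF.1.2.2 ((hF.2 u).1 _ harc rfl)
    · exact (sink_ne_u hF hsink) rfl
  have hreach : ∀ v ∈ S, rch F0 (vo u) (vi v) := by
    intro v hv
    by_contra hnr
    have hvert := hSvert v hv
    have hcyc := sepcore hF hvert hnr
    rcases hv with ⟨h1, h2⟩ | ⟨h1, x, hxZ, harc⟩ | ⟨_, hsink⟩
    · exact h2 (zs_back hcyc h1)
    · rcases Relation.ReflTransGen.cases_tail hcyc with h | ⟨c, hrc, hcn⟩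
      · exact vi_ne_vo h
      · have heq := in_unique hF vi_ne_none hcn harc rfl rfl
        have hc : c = vo x := congrArg Prod.fst heq
        have hr2 : rch F0 (vi v) (vo x) :=
          Relation.ReflTransGen.head hvert (hc ▸ hrc)
        exact h1 (zs_back hr2 hxZ)
    · rcases Relation.ReflTransGen.cases_head hcyc with h | ⟨c, hstep1, hrc⟩
      · exact vo_ne_vi h
      · have hvu : v ≠ u := sink_ne_u hF hsink
        have heq := out_unique hF
          (show vo v ≠ vo u from fun hh => hvu (vo_inj.mp hh)) hstep1 hsink rfl rfl
        have hc : c = none := congrArg Prod.snd heq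
        subst hc
        rcases Relation.ReflTransGen.cases_head hrc with h | ⟨d, hstep2, _⟩
        · exact none_ne_vi h
        · exact vld_not_from_none (hF.1.2.1 _ hstep2)
  have hcontra : ∀ v ∈ S, ∀ v' ∈ S, rch F0 (vo v) (vi v') → False := by
    intro v hv v' hv' hr
    have hvert := hSvert v hv
    have hvert' := hSvert v' hv'
    have hvZ : vo v ∈ Zs G u Y F0 := by
      rcases hv' with ⟨h1, _⟩ | ⟨h1, x, hxZ, harc⟩ | ⟨h1, _⟩
      · exact zs_back hr h1
      · rcases Relation.ReflTransGen.cases_tail hr with h | ⟨c, hrc, hcn⟩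
        · exact absurd h vi_ne_vo
        · have heq := in_unique hF vi_ne_none hcn harc rfl rfl
          have hc : c = vo x := congrArg Prod.fst heq
          exact zs_back (hc ▸ hrc) hxZ
      · exact zs_back (hr.tail hvert') h1
    rcases hv with ⟨_, h2⟩ | ⟨h1, _⟩ | ⟨_, hsink⟩
    · exact h2 hvZ
    · exact h1 (zs_back (Relation.ReflTransGen.single hvert) hvZ)
    · rcases Relation.ReflTransGen.cases_head hr with h | ⟨c, hstep1, hrc⟩
      · exact vo_ne_vi h
      · have hvu : v ≠ u := sink_ne_u hF hsink
        have heq := out_unique hF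
          (show vo v ≠ vo u from fun hh => hvu (vo_inj.mp hh)) hstep1 hsink rfl rfl
        have hc : c = none := congrArg Prod.snd heq
        subst hc
        rcases Relation.ReflTransGen.cases_head hrc with h | ⟨d, hstep2, _⟩
        · exact none_ne_vi h
        · exact vld_not_from_none (hF.1.2.1 _ hstep2)
  have hkey : ∀ a ∈ S, ∀ b ∈ S, rch F0 (vi a) (vi b) → a = b := by
    intro a ha b hb hr
    by_contra hab
    rcases Relation.ReflTransGen.cases_head hr with h | ⟨c, hstep, hrc⟩
    · exact hab (vi_inj.mp h)
    · have hc : c = vo a := vld_out_vi (hF.1.2.1 _ hstep)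
      subst hc
      exact hcontra a ha b hb hrc
  have hfirst : ∀ v ∈ S, ∃ c, (vo u, c) ∈ F0 ∧ rch F0 c (vi v) := by
    intro v hv
    rcases Relation.ReflTransGen.cases_head (hreach v hv) with h | ⟨c, h1, h2⟩
    · exact absurd h vo_ne_vi
    · exact ⟨c, h1, h2⟩
  set φ : V → Nd V × Nd V := fun v =>
    if h : ∃ c, (vo u, c) ∈ F0 ∧ rch F0 c (vi v) then (vo u, Classical.choose h)
    else (none, none) with hφ_def
  have hφ_mem : ∀ v ∈ S, φ v ∈ {a : Nd V × Nd V | a ∈ F0 ∧ a.1 = vo u} := by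
    intro v hv
    have h := hfirst v hv
    have : φ v = (vo u, Classical.choose h) := dif_pos h
    rw [this]
    exact ⟨(Classical.choose_spec h).1, rfl⟩
  have hφ_inj : Set.InjOn φ S := by
    intro v hv v' hv' heq
    have h := hfirst v hv
    have h' := hfirst v' hv'
    have e1 : φ v = (vo u, Classical.choose h) := dif_pos h
    have e2 : φ v' = (vo u, Classical.choose h') := dif_pos h'
    have hcc : Classical.choose h = Classical.choose h' := by
      have := e1.symm.trans (heq.trans e2)
      exact congrArg Prod.snd this
    have hr1 := (Classical.choose_spec h).2
    have hr2 := (Classical.choose_spec h').2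
    rw [hcc] at hr1
    have hc_ne : Classical.choose h' ≠ vo u := by
      intro h0
      exact no_into_source hF.1 (h0 ▸ (Classical.choose_spec h').1)
    rcases lin hF hc_ne hr1 hr2 with hr | hr
    · exact hkey v hv v' hv' hr
    · exact (hkey v' hv' v hv hr).symm
  have hOAfin : {a : Nd V × Nd V | a ∈ F0 ∧ a.1 = vo u}.Finite :=
    hF.1.1.subset (fun a ha => ha.1)
  have hSfin : S.Finite := by
    apply Set.Finite.subset
      (hF.1.1.image (fun a : Nd V × Nd V => ((a.1.getD (u, true)).1)))
    intro v hv
    exact ⟨(vi v, vo v), hSvert v hv, rfl⟩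
  have hScard : S.ncard < k := by
    have := Set.ncard_le_ncard_of_injOn φ hφ_mem hφ_inj hOAfin
    omega
  obtain ⟨y, hyY, hyS, hyu, wlk, hwlk⟩ := hsep S hSfin hScard hSu
  have claim : ∀ {a b : V} (p : G.Walk a b), vo a ∈ Zs G u Y F0 →
      (∀ x ∈ p.support, x ∉ S) → vo b ∈ Zs G u Y F0 := by
    intro a b p
    induction p with
    | nil => exact fun h _ => h
    | @cons a c b hadj q ihq =>
      intro ha hsup
      have hcsup : c ∈ (SimpleGraph.Walk.cons hadj q).support := by
        rw [SimpleGraph.Walk.support_cons]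
        exact List.mem_cons_of_mem _ q.start_mem_support
      have hcS : c ∉ S := hsup c hcsup
      have hciZ : vi c ∈ Zs G u Y F0 := by
        by_cases harc : (vo a, vi c) ∈ F0
        · by_contra hciZ
          exact hcS (Or.inr (Or.inl ⟨hciZ, a, ha, harc⟩))
        · exact zs_fwd ha (vld_edge hadj) harc
      have hcoZ : vo c ∈ Zs G u Y F0 := by
        by_contra h
        exact hcS (Or.inl ⟨hciZ, h⟩)
      refine ihq hcoZ (fun x hx => hsup x ?_)
      rw [SimpleGraph.Walk.support_cons]
      exact List.mem_cons_of_mem _ hx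
  have hyZ : vo y ∈ Zs G u Y F0 := claim wlk zs_source hwlk
  have hysink : (vo y, none) ∉ F0 := by
    intro h
    exact hyS (Or.inr (Or.inr ⟨hyZ, h⟩))
  exact hT (zs_fwd hyZ (vld_sink hyY hyu) hysink)

end Residual


section CvHelpers

variable {F F' : Set (Nd V × Nd V)} {b : Nd V × Nd V} {v : V}

lemma cv_congr
    (h : ∀ a : Nd V × Nd V,
      (a.1 = vi v ∨ a.2 = vi v ∨ a.1 = vo v ∨ a.2 = vo v) → (a ∈ F ↔ a ∈ F'))
    (hc : Cv u F v) : Cv u F' v := by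
  have hvx : ((vi v, vo v) : Nd V × Nd V) ∈ F ↔ (vi v, vo v) ∈ F' :=
    h _ (Or.inl rfl)
  obtain ⟨c1a, c1b, c1u, c2⟩ := hc
  refine ⟨?_, ?_, ?_, ?_⟩
  · intro a ha h2
    exact hvx.mp (c1a a ((h a (Or.inr (Or.inl h2))).mpr ha) h2)
  · intro hvF'
    obtain ⟨a, ha, h2⟩ := c1b (hvx.mpr hvF')
    exact ⟨a, (h a (Or.inr (Or.inl h2))).mp ha, h2⟩
  · intro a ha a' ha' h2 h2'
    exact c1u a ((h a (Or.inr (Or.inl h2))).mpr ha)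
      a' ((h a' (Or.inr (Or.inl h2'))).mpr ha') h2 h2'
  · intro hvu
    obtain ⟨c2a, c2b, c2u⟩ := c2 hvu
    refine ⟨?_, ?_, ?_⟩
    · intro a ha h1
      exact hvx.mp (c2a a ((h a (Or.inr (Or.inr (Or.inl h1)))).mpr ha) h1)
    · intro hvF'
      obtain ⟨a, ha, h1⟩ := c2b (hvx.mpr hvF')
      exact ⟨a, (h a (Or.inr (Or.inr (Or.inl h1)))).mp ha, h1⟩
    · intro a ha a' ha' h1 h1'
      exact c2u a ((h a (Or.inr (Or.inr (Or.inl h1)))).mpr ha)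
        a' ((h a' (Or.inr (Or.inr (Or.inl h1')))).mpr ha') h1 h1'

lemma untouched_iff_insert
    (hb : b.1 ≠ vi v ∧ b.2 ≠ vi v ∧ b.1 ≠ vo v ∧ b.2 ≠ vo v) :
    ∀ a : Nd V × Nd V,
      (a.1 = vi v ∨ a.2 = vi v ∨ a.1 = vo v ∨ a.2 = vo v) → (a ∈ F ↔ a ∈ insert b F) := by
  intro a ht
  constructor
  · exact fun h => Set.mem_insert_of_mem _ h
  · intro h
    rcases h with h | h
    · exfalso
      subst h
      rcases ht with h | h | h | h
      exacts [hb.1 h, hb.2.1 h, hb.2.2.1 h, hb.2.2.2 h]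
    · exact h

lemma untouched_iff_diff
    (hb : b.1 ≠ vi v ∧ b.2 ≠ vi v ∧ b.1 ≠ vo v ∧ b.2 ≠ vo v) :
    ∀ a : Nd V × Nd V,
      (a.1 = vi v ∨ a.2 = vi v ∨ a.1 = vo v ∨ a.2 = vo v) → (a ∈ F ↔ a ∈ F \ {b}) := by
  intro a ht
  constructor
  · intro h
    refine ⟨h, fun hab => ?_⟩
    rw [Set.mem_singleton_iff] at hab
    subst hab
    rcases ht with h' | h' | h' | h'
    exacts [hb.1 h', hb.2.1 h', hb.2.2.1 h', hb.2.2.2 h']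
  · exact fun h => h.1

lemma cv_insert (hb : b.1 ≠ vi v ∧ b.2 ≠ vi v ∧ b.1 ≠ vo v ∧ b.2 ≠ vo v)
    (hc : Cv u F v) : Cv u (insert b F) v :=
  cv_congr (untouched_iff_insert hb) hc

lemma cv_diff (hb : b.1 ≠ vi v ∧ b.2 ≠ vi v ∧ b.1 ≠ vo v ∧ b.2 ≠ vo v)
    (hc : Cv u F v) : Cv u (F \ {b}) v :=
  cv_congr (untouched_iff_diff hb) hc

lemma gd_insert (hv : Vld G u Y b.1 b.2) (hbu : b ≠ (vi u, vo u))
    (hg : Gd G u Y F) : Gd G u Y (insert b F) := by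
  refine ⟨hg.1.insert b, ?_, ?_⟩
  · intro a ha
    rcases ha with h | h
    · subst h; exact hv
    · exact hg.2.1 a h
  · intro h
    rcases h with h | h
    · exact hbu h.symm
    · exact hg.2.2 h

lemma gd_diff (hg : Gd G u Y F) : Gd G u Y (F \ {b}) :=
  ⟨hg.1.subset Set.diff_subset, fun a ha => hg.2.1 a ha.1, fun h => hg.2.2 h.1⟩

lemma pres_insert (hb : b.1 ≠ vo u) :
    ∀ a : Nd V × Nd V, a.1 = vo u → (a ∈ insert b F ↔ a ∈ F) := by
  intro a ha
  constructor
  · intro h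
    rcases h with h | h
    · exact absurd (h ▸ ha : b.1 = vo u) hb
    · exact h
  · exact fun h => Set.mem_insert_of_mem _ h

lemma pres_diff (hb : b.1 ≠ vo u) :
    ∀ a : Nd V × Nd V, a.1 = vo u → (a ∈ F \ {b} ↔ a ∈ F) := by
  intro a ha
  constructor
  · exact fun h => h.1
  · intro h
    refine ⟨h, fun hab => ?_⟩
    rw [Set.mem_singleton_iff] at hab
    exact hb (hab ▸ ha)

end CvHelpers


section Pend

variable (G u Y)

/-- Pending state: path head entered `vi w`, `w` previously unused. -/
def Ex1 (F0 Ft : Set (Nd V × Nd V)) (w : V) : Prop :=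
  w ≠ u ∧ Gd G u Y Ft ∧ (∀ v, v ≠ w → Cv u Ft v) ∧
  (vi w, vo w) ∉ Ft ∧
  (∃ a ∈ Ft, a.2 = vi w) ∧
  (∀ a ∈ Ft, ∀ b ∈ Ft, a.2 = vi w → b.2 = vi w → a = b) ∧
  (∀ a ∈ Ft, a.1 ≠ vo w) ∧
  (∀ a ∈ F0, a.2 = vi w → a ∈ Ft)

/-- Pending state: path head entered `vi w`, `w` already used (two in-arcs). -/
def Ex2 (F0 Ft : Set (Nd V × Nd V)) (w : V) : Prop :=
  w ≠ u ∧ Gd G u Y Ft ∧ (∀ v, v ≠ w → Cv u Ft v) ∧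
  (vi w, vo w) ∈ Ft ∧ (vi w, vo w) ∈ F0 ∧
  (∃ aN ∈ Ft, aN.2 = vi w ∧ aN ∉ F0 ∧ ∀ b ∈ Ft, b.2 = vi w → b = aN ∨ b ∈ F0) ∧
  (∀ a ∈ F0, a.2 = vi w → a ∈ Ft) ∧
  (∃ a ∈ Ft, a.1 = vo w) ∧
  (∀ a ∈ Ft, ∀ b ∈ Ft, a.1 = vo w → b.1 = vo w → a = b)

/-- Pending state: path head at `vo x`, needing an out-arc. -/
def ExO (Ft : Set (Nd V × Nd V)) (x : V) : Prop :=
  x ≠ u ∧ Gd G u Y Ft ∧ (∀ v, v ≠ x → Cv u Ft v) ∧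
  (vi x, vo x) ∈ Ft ∧
  (∀ a ∈ Ft, a.1 ≠ vo x) ∧
  (∃ a ∈ Ft, a.2 = vi x) ∧
  (∀ a ∈ Ft, ∀ b ∈ Ft, a.2 = vi x → b.2 = vi x → a = b)

def Pend (F0 Ft : Set (Nd V × Nd V)) (p : Nd V) : Prop :=
  (∃ w, p = vi w ∧ (Ex1 G u Y F0 Ft w ∨ Ex2 G u Y F0 Ft w)) ∨
  (∃ x, p = vo x ∧ ExO G u Y Ft x)

end Pend

section NodupChain

lemma exists_nodup_chain_aux {α : Type*} {r : α → α → Prop} :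
    ∀ (n : ℕ) (a b : α) (l : List α), l.length ≤ n → List.Chain r a l →
      (a :: l).getLast (List.cons_ne_nil a l) = b →
      ∃ m : List α, List.Chain r a m ∧ (a :: m).getLast (List.cons_ne_nil a m) = b ∧
        (a :: m).Nodup ∧ ∀ x ∈ m, x ∈ l := by
  intro n
  induction n with
  | zero =>
    intro a b l hlen hc hl
    have h0 : l = [] := List.length_eq_zero_iff.mp (Nat.le_zero.mp hlen)
    subst h0
    exact ⟨[], List.Chain.nil, hl, List.nodup_singleton a, by simp⟩
  | succ n ih =>
    intro a b l hlen hc hl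
    by_cases hmem : a ∈ l
    · obtain ⟨s, t, rfl⟩ := List.append_of_mem hmem
      have hct : List.Chain r a t := (List.isChain_cons_split.mp hc).2
      have hlt : (a :: t).getLast (List.cons_ne_nil a t) = b := by
        rw [← hl]
        rw [show ((a :: (s ++ a :: t)).getLast (List.cons_ne_nil _ _)) =
            ((a :: s) ++ (a :: t)).getLast (by simp) from by congr 1]
        rw [List.getLast_append_of_right_ne_nil _ _ (List.cons_ne_nil a t)]
      have hlen' : t.length ≤ n := by
        simp [List.length_append] at hlen
        omega
      obtain ⟨m, h1, h2, h3, h4⟩ := ih a b t hlen' hct hlt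
      exact ⟨m, h1, h2, h3, fun x hx => by
        simp only [List.mem_append, List.mem_cons]
        exact Or.inr (Or.inr (h4 x hx))⟩
    · cases l with
      | nil => exact ⟨[], List.Chain.nil, hl, List.nodup_singleton a, by simp⟩
      | cons c l' =>
        have hc1 : r a c := (List.chain_cons.mp hc).1
        have hc2 : List.Chain r c l' := (List.chain_cons.mp hc).2
        have hl' : (c :: l').getLast (List.cons_ne_nil c l') = b := by
          rw [← hl, List.getLast_cons (List.cons_ne_nil c l')]
        have hlen' : l'.length ≤ n := by
          simp at hlen
          omega
        obtain ⟨m, h1, h2, h3, h4⟩ := ih c b l' hlen' hc2 hl'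
        refine ⟨c :: m, List.Chain.cons hc1 h1, ?_, ?_, ?_⟩
        · rw [List.getLast_cons (List.cons_ne_nil c m)]
          exact h2
        · rw [List.nodup_cons]
          refine ⟨?_, h3⟩
          intro hax
          rcases List.mem_cons.mp hax with h | h
          · exact hmem (by rw [h]; exact List.mem_cons_self)
          · exact hmem (List.mem_cons_of_mem _ (h4 a h))
        · intro x hx
          rcases List.mem_cons.mp hx with h | h
          · rw [h]; exact List.mem_cons_self
          · exact List.mem_cons_of_mem _ (h4 x h)

lemma exists_nodup_chain {α : Type*} {r : α → α → Prop} {a b : α}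
    (h : Relation.ReflTransGen r a b) :
    ∃ m : List α, List.Chain r a m ∧ (a :: m).getLast (List.cons_ne_nil a m) = b ∧
      (a :: m).Nodup := by
  obtain ⟨l, hc, hl⟩ := List.exists_isChain_cons_of_relationReflTransGen h
  obtain ⟨m, h1, h2, h3, _⟩ := exists_nodup_chain_aux l.length a b l le_rfl hc hl
  exact ⟨m, h1, h2, h3⟩

end NodupChain

section Arrive

variable {F0 Ft : Set (Nd V × Nd V)}

/-- Arrival at the in-node `vi z` along a freshly inserted edge arc. -/
lemma arrive (hF0 : Flow G u Y F0) {x z : V}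
    (hnF0 : (vo x, vi z) ∉ F0) (hadj : G.Adj x z) (hzu : z ≠ u)
    (hGdFt : Gd G u Y Ft)
    (hcv : ∀ v, v ≠ z → Cv u (insert ((vo x, vi z) : Nd V × Nd V) Ft) v)
    (hInvz : ∀ a : Nd V × Nd V, (a.1 = vi z ∨ a.2 = vi z) → (a ∈ Ft ↔ a ∈ F0))
    (hCvz : Cv u Ft z) :
    Ex1 G u Y F0 (insert ((vo x, vi z) : Nd V × Nd V) Ft) z ∨
    Ex2 G u Y F0 (insert ((vo x, vi z) : Nd V × Nd V) Ft) z := by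
  have hxz : x ≠ z := fun h => G.irrefl (h ▸ hadj)
  have hGd' : Gd G u Y (insert ((vo x, vi z) : Nd V × Nd V) Ft) :=
    gd_insert (vld_edge hadj) (by
      intro h
      exact vo_ne_vi (congrArg Prod.fst h)) hGdFt
  by_cases hvz : ((vi z, vo z) : Nd V × Nd V) ∈ F0
  · -- z already used: Ex2
    refine Or.inr ⟨hzu, hGd', hcv, ?_, hvz, ?_, ?_, ?_, ?_⟩
    · exact Set.mem_insert_of_mem _ ((hInvz _ (Or.inl rfl)).mpr hvz)
    · refine ⟨(vo x, vi z), Set.mem_insert _ _, rfl, hnF0, ?_⟩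
      intro c hc h2
      rcases hc with h | h
      · exact Or.inl h
      · exact Or.inr ((hInvz c (Or.inr h2)).mp h)
    · intro a ha h2
      exact Set.mem_insert_of_mem _ ((hInvz a (Or.inr h2)).mpr ha)
    · obtain ⟨a, ha, h1⟩ := (hCvz.2.2.2 hzu).2.1 ((hInvz _ (Or.inl rfl)).mpr hvz)
      exact ⟨a, Set.mem_insert_of_mem _ ha, h1⟩
    · intro a ha a' ha' h1 h1'
      have hma : a ∈ Ft := by
        rcases ha with h | h
        · exact absurd ((congrArg Prod.fst h).symm.trans h1)
            (fun hh => hxz (vo_inj.mp hh))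
        · exact h
      have hma' : a' ∈ Ft := by
        rcases ha' with h | h
        · exact absurd ((congrArg Prod.fst h).symm.trans h1')
            (fun hh => hxz (vo_inj.mp hh))
        · exact h
      exact (hCvz.2.2.2 hzu).2.2 a hma a' hma' h1 h1'
  · -- z fresh: Ex1
    refine Or.inl ⟨hzu, hGd', hcv, ?_, ?_, ?_, ?_, ?_⟩
    · intro h
      rcases h with h | h
      · exact vi_ne_vo (congrArg Prod.fst h)
      · exact hvz ((hInvz _ (Or.inl rfl)).mp h)
    · exact ⟨(vo x, vi z), Set.mem_insert _ _, rfl⟩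
    · intro a ha a' ha' h2 h2'
      have hft : ∀ c : Nd V × Nd V, c ∈ insert ((vo x, vi z) : Nd V × Nd V) Ft →
          c.2 = vi z → c = (vo x, vi z) := by
        intro c hc hc2
        rcases hc with h | h
        · exact h
        · exact absurd ((hF0.2 z).1 c ((hInvz c (Or.inr hc2)).mp h) hc2) hvz
      rw [hft a ha h2, hft a' ha' h2']
    · intro a ha h1
      rcases ha with h | h
      · exact (fun hh => hxz (vo_inj.mp hh)) ((congrArg Prod.fst h).symm.trans h1)
      · exact hvz ((hInvz _ (Or.inl rfl)).mp ((hCvz.2.2.2 hzu).1 a h h1))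
    · intro a ha h2
      exact absurd ((hF0.2 z).1 a ha h2) hvz

end Arrive


section AugStep

variable {F0 : Set (Nd V × Nd V)}

lemma mem_insert_iff_of_ne {Ft : Set (Nd V × Nd V)} {b a : Nd V × Nd V} (hab : a ≠ b) :
    a ∈ insert b Ft ↔ a ∈ Ft := by
  simp [Set.mem_insert_iff, hab]

lemma mem_diff_iff_of_ne {Ft : Set (Nd V × Nd V)} {b a : Nd V × Nd V} (hab : a ≠ b) :
    a ∈ Ft \ {b} ↔ a ∈ Ft := by
  simp [Set.mem_diff, hab]

lemma inv_update {Ft F' : Set (Nd V × Nd V)} {l' : List (Nd V)} {b : Nd V × Nd V}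
    (hb1 : b.1 ∉ l') (hb2 : b.2 ∉ l')
    (hINV : ∀ a : Nd V × Nd V, (a.1 ∈ l' ∨ a.2 ∈ l') → (a ∈ Ft ↔ a ∈ F0))
    (hrel : ∀ a : Nd V × Nd V, a ≠ b → (a ∈ F' ↔ a ∈ Ft)) :
    ∀ a : Nd V × Nd V, (a.1 ∈ l' ∨ a.2 ∈ l') → (a ∈ F' ↔ a ∈ F0) := by
  intro a ht
  have hab : a ≠ b := by
    rintro rfl
    rcases ht with h | h
    exacts [hb1 h, hb2 h]
  exact (hrel a hab).trans (hINV a ht)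

lemma augStep (hF0 : Flow G u Y F0) :
    ∀ (l : List (Nd V)) (p : Nd V) (Ft : Set (Nd V × Nd V)),
      List.Chain (Rd G u Y F0) p l →
      (p :: l).getLast (List.cons_ne_nil _ _) = (none : Nd V) →
      (p :: l).Nodup →
      (vo u ∉ p :: l) →
      (∀ a : Nd V × Nd V, (a.1 ∈ l ∨ a.2 ∈ l) → (a ∈ Ft ↔ a ∈ F0)) →
      Pend G u Y F0 Ft p →
      ∃ Ff, Flow G u Y Ff ∧ ∀ a : Nd V × Nd V, a.1 = vo u → (a ∈ Ff ↔ a ∈ Ft) := by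
  intro l
  induction l with
  | nil =>
    intro p Ft _ hlast _ _ _ hpend
    exfalso
    simp only [List.getLast_singleton] at hlast
    rcases hpend with ⟨w, hp, _⟩ | ⟨x, hp, _⟩
    · exact vi_ne_none (hp ▸ hlast)
    · exact vo_ne_none (hp ▸ hlast)
  | cons q l' ih =>
    intro p Ft hchain hlast hnodup hvou hINV hpend
    have hpq : Rd G u Y F0 p q := (List.chain_cons.mp hchain).1
    have hchain' : List.Chain (Rd G u Y F0) q l' := (List.chain_cons.mp hchain).2
    have hlast' : (q :: l').getLast (List.cons_ne_nil _ _) = (none : Nd V) := by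
      rw [← hlast, List.getLast_cons (List.cons_ne_nil q l')]
    have hnodup' : (q :: l').Nodup := (List.nodup_cons.mp hnodup).2
    have hvou' : vo u ∉ q :: l' := fun h => hvou (List.mem_cons_of_mem _ h)
    have hpnotin : p ∉ q :: l' := (List.nodup_cons.mp hnodup).1
    have hqnotin : q ∉ l' := (List.nodup_cons.mp hnodup').1
    have hpnotin' : p ∉ l' := fun h => hpnotin (List.mem_cons_of_mem _ h)
    have hINVq : ∀ a : Nd V × Nd V, (a.1 = q ∨ a.2 = q) → (a ∈ Ft ↔ a ∈ F0) := by
      intro a ht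
      refine hINV a ?_
      rcases ht with h | h
      · exact Or.inl (by rw [h]; exact List.mem_cons_self)
      · exact Or.inr (by rw [h]; exact List.mem_cons_self)
    have hINVl' : ∀ a : Nd V × Nd V, (a.1 ∈ l' ∨ a.2 ∈ l') → (a ∈ Ft ↔ a ∈ F0) := by
      intro a ht
      refine hINV a ?_
      rcases ht with h | h
      · exact Or.inl (List.mem_cons_of_mem _ h)
      · exact Or.inr (List.mem_cons_of_mem _ h)
    rcases hpend with ⟨w, rfl, hex⟩ | ⟨x, rfl, hex⟩
    · -- current node is vi w
      rcases hpq with ⟨hvld, hnF0⟩ | harc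
      · -- forward step: insert the vertex arc of w
        have hq : q = vo w := vld_out_vi hvld
        subst hq
        rcases hex with ⟨hwu, hGd, hcv, hvx, hin, hinu, hno, _⟩ | hex2
        · have hbne_u : ((vi w, vo w) : Nd V × Nd V) ≠ (vi u, vo u) := by
            intro h
            exact hwu (vi_inj.mp (congrArg Prod.fst h))
          have hpend' : Pend G u Y F0 (insert ((vi w, vo w) : Nd V × Nd V) Ft) (vo w) := by
            refine Or.inr ⟨w, rfl, hwu, gd_insert (vld_vertex w) hbne_u hGd, ?_, ?_, ?_, ?_, ?_⟩
            · intro v hv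
              refine cv_insert ⟨?_, ?_, ?_, ?_⟩ (hcv v hv)
              · exact fun h => hv (vi_inj.mp h).symm
              · exact vo_ne_vi
              · exact vi_ne_vo
              · exact fun h => hv (vo_inj.mp h).symm
            · exact Set.mem_insert _ _
            · intro a ha h1
              rcases ha with h | h
              · exact vi_ne_vo ((congrArg Prod.fst h).symm.trans h1)
              · exact hno a h h1
            · obtain ⟨a, ha, h2⟩ := hin
              exact ⟨a, Set.mem_insert_of_mem _ ha, h2⟩
            · intro a ha a' ha' h2 h2'
              have hma : a ∈ Ft := by
                rcases ha with h | h
                · exact absurd ((congrArg Prod.snd h).symm.trans h2) vo_ne_vi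
                · exact h
              have hma' : a' ∈ Ft := by
                rcases ha' with h | h
                · exact absurd ((congrArg Prod.snd h).symm.trans h2') vo_ne_vi
                · exact h
              exact hinu a hma a' hma' h2 h2'
          have hINV' := inv_update (F0 := F0) (l' := l') (b := ((vi w, vo w) : Nd V × Nd V)) hpnotin' hqnotin
            hINVl' (fun a hab => mem_insert_iff_of_ne hab)
          obtain ⟨Ff, hFf, hpres⟩ :=
            ih (vo w) (insert ((vi w, vo w) : Nd V × Nd V) Ft) hchain' hlast' hnodup' hvou' hINV' hpend'
          exact ⟨Ff, hFf, fun a ha =>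
            (hpres a ha).trans (pres_insert vi_ne_vo a ha)⟩
        · exact absurd hex2.2.2.2.2.1 hnF0
      · -- backward step: remove the in-arc (q, vi w)
        obtain ⟨z, hqz, hadj⟩ := vld_into_vi (hF0.1.2.1 _ harc)
        subst hqz
        have hzu : z ≠ u := by
          intro h
          exact hvou' (by rw [h]; exact List.mem_cons_self)
        have hzw : z ≠ w := fun h => G.irrefl (h ▸ hadj)
        have hbFt : ((vo z, vi w) : Nd V × Nd V) ∈ Ft := by
          rcases hex with ⟨_, _, _, _, _, _, _, hf0⟩ | ⟨_, _, _, _, _, _, hf0, _, _⟩ <;>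
            exact hf0 ((vo z, vi w) : Nd V × Nd V) harc rfl
        have hvxz : ((vi z, vo z) : Nd V × Nd V) ∈ F0 := ((hF0.2 z).2.2.2 hzu).1 _ harc rfl
        have hvxzFt : ((vi z, vo z) : Nd V × Nd V) ∈ Ft :=
          (hINVq _ (Or.inr rfl)).mpr hvxz
        have hGdFt : Gd G u Y Ft := by
          rcases hex with ⟨_, hGd, _⟩ | ⟨_, hGd, _⟩ <;> exact hGd
        have hCvz : Cv u Ft z := by
          rcases hex with ⟨_, _, hcv, _⟩ | ⟨_, _, hcv, _⟩ <;> exact hcv z hzw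
        have hCvFtv : ∀ v, v ≠ w → Cv u Ft v := by
          rcases hex with ⟨_, _, hcv, _⟩ | ⟨_, _, hcv, _⟩ <;> exact hcv
        have hCvw' : Cv u (Ft \ {((vo z, vi w) : Nd V × Nd V)}) w := by
          rcases hex with ⟨hwu, hGd, hcv, hvx, hin, hinu, hno, hf0⟩ |
            ⟨hwu, hGd, hcv, hvxF, hvxF0, ⟨aN, haN, haN2, haNF0, haNall⟩, hf0, hexo, hexou⟩
          · refine ⟨?_, ?_, ?_, ?_⟩
            · intro a ha h2
              exact absurd (hinu a ha.1 ((vo z, vi w) : Nd V × Nd V) hbFt h2 rfl) (fun h => ha.2 (Set.mem_singleton_iff.mpr h))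
            · intro h
              exact absurd h.1 hvx
            · intro a ha a' ha' h2 h2'
              exact hinu a ha.1 a' ha'.1 h2 h2'
            · intro _
              refine ⟨?_, ?_, ?_⟩
              · intro a ha h1
                exact absurd h1 (hno a ha.1)
              · intro h
                exact absurd h.1 hvx
              · intro a ha a' ha' h1 h1'
                exact absurd h1 (hno a ha.1)
          · have haNb : aN ≠ ((vo z, vi w) : Nd V × Nd V) := fun h => haNF0 (h ▸ harc)
            have hvxb : ((vi w, vo w) : Nd V × Nd V) ≠ ((vo z, vi w) : Nd V × Nd V) := by
              intro h
              exact vi_ne_vo (congrArg Prod.fst h)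
            have key : ∀ c : Nd V × Nd V, c ∈ Ft \ {((vo z, vi w) : Nd V × Nd V)} → c.2 = vi w → c = aN := by
              intro c hc hc2
              rcases haNall c hc.1 hc2 with h | h
              · exact h
              · exact absurd ((hF0.2 w).2.2.1 c h ((vo z, vi w) : Nd V × Nd V) harc hc2 rfl) hc.2
            refine ⟨?_, ?_, ?_, ?_⟩
            · intro a ha _
              exact ⟨hvxF, fun h => hvxb (Set.mem_singleton_iff.mp h)⟩
            · intro _
              exact ⟨aN, ⟨haN, fun h => haNb (Set.mem_singleton_iff.mp h)⟩, haN2⟩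
            · intro a ha a' ha' h2 h2'
              rw [key a ha h2, key a' ha' h2']
            · intro _
              refine ⟨?_, ?_, ?_⟩
              · intro a ha _
                exact ⟨hvxF, fun h => hvxb (Set.mem_singleton_iff.mp h)⟩
              · intro _
                obtain ⟨a, haFt, h1⟩ := hexo
                refine ⟨a, ⟨haFt, fun h => ?_⟩, h1⟩
                rw [Set.mem_singleton_iff] at h
                exact (fun hh => hzw (vo_inj.mp hh).symm) ((congrArg Prod.fst h).symm.trans h1).symm
              · intro a ha a' ha' h1 h1'
                exact hexou a ha.1 a' ha'.1 h1 h1'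
        have hpend' : Pend G u Y F0 (Ft \ {((vo z, vi w) : Nd V × Nd V)}) (vo z) := by
          refine Or.inr ⟨z, rfl, hzu, gd_diff hGdFt, ?_, ?_, ?_, ?_, ?_⟩
          · intro v hv
            by_cases hvw : v = w
            · subst hvw
              exact hCvw'
            · refine cv_diff ⟨?_, ?_, ?_, ?_⟩ (hCvFtv v hvw)
              · exact vo_ne_vi
              · exact fun h => hvw (vi_inj.mp h).symm
              · exact fun h => hv (vo_inj.mp h).symm
              · exact vi_ne_vo
          · exact ⟨hvxzFt, fun h => vi_ne_vo (congrArg Prod.fst (Set.mem_singleton_iff.mp h))⟩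
          · intro a ha h1
            have haF0 : a ∈ F0 := (hINVq a (Or.inl h1)).mp ha.1
            have : a = ((vo z, vi w) : Nd V × Nd V) := ((hF0.2 z).2.2.2 hzu).2.2 a haF0 ((vo z, vi w) : Nd V × Nd V) harc h1 rfl
            exact ha.2 (Set.mem_singleton_iff.mpr this)
          · obtain ⟨a, haFt, h2⟩ := hCvz.2.1 hvxzFt
            refine ⟨a, ⟨haFt, fun h => ?_⟩, h2⟩
            rw [Set.mem_singleton_iff] at h
            exact (fun hh => hzw (vi_inj.mp hh)) ((congrArg Prod.snd h).symm.trans h2).symm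
          · intro a ha a' ha' h2 h2'
            exact hCvz.2.2.1 a ha.1 a' ha'.1 h2 h2'
        have hINV' := inv_update (F0 := F0) (l' := l') (b := ((vo z, vi w) : Nd V × Nd V)) hqnotin hpnotin'
          hINVl' (fun a hab => mem_diff_iff_of_ne hab)
        obtain ⟨Ff, hFf, hpres⟩ :=
          ih (vo z) (Ft \ {((vo z, vi w) : Nd V × Nd V)}) hchain' hlast' hnodup' hvou' hINV' hpend'
        refine ⟨Ff, hFf, fun a ha => (hpres a ha).trans (pres_diff ?_ a ha)⟩
        exact fun h => hzu (vo_inj.mp h)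
    · -- current node is vo x
      obtain ⟨hxu, hGd, hcv, hvx, hno, hin, hinu⟩ := hex
      rcases hpq with ⟨hvld, hnF0⟩ | harc
      · rcases hvld with ⟨v, h1, h2⟩ | ⟨v, z, hadj, h1, h2⟩ | ⟨v, hvY, hvu, h1, h2⟩
        · exact absurd h1 vo_ne_vi
        · -- forward edge arc
          have hvxeq : x = v := vo_inj.mp h1
          rw [← hvxeq] at hadj
          subst h2
          by_cases hzu : z = u
          · -- entering vi u: impossible by lookahead
            exfalso
            cases l' with
            | nil =>
              simp only [List.getLast_singleton] at hlast'
              exact vi_ne_none hlast'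
            | cons r l'' =>
              have hstep2 : Rd G u Y F0 (vi z) r := (List.chain_cons.mp hchain').1
              rcases hstep2 with ⟨hv', _⟩ | harc2
              · have hr : r = vo z := vld_out_vi hv'
                refine hvou' ?_
                rw [← hzu, ← hr]
                exact List.mem_cons_of_mem _ (List.mem_cons_self)
              · refine hF0.1.2.2 ?_
                have hthis := (hF0.2 z).1 _ harc2 rfl
                rw [hzu] at hthis
                exact hthis
          · have hzx : z ≠ x := fun h => G.irrefl (h ▸ hadj)
            have hcv' : ∀ v', v' ≠ z → Cv u (insert ((vo x, vi z) : Nd V × Nd V) Ft) v' := by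
              intro v' hv'
              by_cases hvx' : v' = x
              · rw [hvx']
                refine ⟨?_, ?_, ?_, ?_⟩
                · intro a _ _
                  exact Set.mem_insert_of_mem _ hvx
                · intro _
                  obtain ⟨a, haFt, h2⟩ := hin
                  exact ⟨a, Set.mem_insert_of_mem _ haFt, h2⟩
                · intro a ha a' ha' h2 h2'
                  have hma : a ∈ Ft := by
                    rcases ha with h | h
                    · exact absurd ((congrArg Prod.snd h).symm.trans h2)
                        (fun hh => hzx (vi_inj.mp hh))
                    · exact h
                  have hma' : a' ∈ Ft := by
                    rcases ha' with h | h
                    · exact absurd ((congrArg Prod.snd h).symm.trans h2')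
                        (fun hh => hzx (vi_inj.mp hh))
                    · exact h
                  exact hinu a hma a' hma' h2 h2'
                · intro _
                  refine ⟨?_, ?_, ?_⟩
                  · intro a _ _
                    exact Set.mem_insert_of_mem _ hvx
                  · intro _
                    exact ⟨((vo x, vi z) : Nd V × Nd V), Set.mem_insert _ _, rfl⟩
                  · intro a ha a' ha' h1 h1'
                    have hma : a = ((vo x, vi z) : Nd V × Nd V) := by
                      rcases ha with h | h
                      · exact h
                      · exact absurd h1 (hno a h)
                    have hma' : a' = ((vo x, vi z) : Nd V × Nd V) := by
                      rcases ha' with h | h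
                      · exact h
                      · exact absurd h1' (hno a' h)
                    rw [hma, hma']
              · refine cv_insert ⟨?_, ?_, ?_, ?_⟩ (hcv v' hvx')
                · exact vo_ne_vi
                · exact fun h => hv' (vi_inj.mp h).symm
                · exact fun h => hvx' (vo_inj.mp h).symm
                · exact vi_ne_vo
            have hInvz : ∀ a : Nd V × Nd V, (a.1 = vi z ∨ a.2 = vi z) → (a ∈ Ft ↔ a ∈ F0) :=
              fun a ht => hINVq a ht
            have hCvz : Cv u Ft z := hcv z (fun h => hzx h)
            have hpend' : Pend G u Y F0 (insert ((vo x, vi z) : Nd V × Nd V) Ft) (vi z) :=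
              Or.inl ⟨z, rfl, arrive hF0 hnF0 hadj hzu hGd hcv' hInvz hCvz⟩
            have hINV' := inv_update (F0 := F0) (l' := l') (b := ((vo x, vi z) : Nd V × Nd V)) hpnotin' hqnotin
              hINVl' (fun a hab => mem_insert_iff_of_ne hab)
            obtain ⟨Ff, hFf, hpres⟩ :=
              ih (vi z) (insert ((vo x, vi z) : Nd V × Nd V) Ft) hchain' hlast' hnodup' hvou' hINV' hpend'
            refine ⟨Ff, hFf, fun a ha => (hpres a ha).trans (pres_insert ?_ a ha)⟩
            exact fun h => hxu (vo_inj.mp h)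
        · -- sink arc: finish
          have hvxeq : x = v := vo_inj.mp h1
          rw [← hvxeq] at hvY hvu
          subst h2
          have hl'nil : l' = [] := by
            cases l' with
            | nil => rfl
            | cons r l'' =>
              exfalso
              rw [List.getLast_cons (List.cons_ne_nil r l'')] at hlast'
              exact hqnotin (hlast' ▸ List.getLast_mem (List.cons_ne_nil r l''))
          have hflow : Flow G u Y (insert ((vo x, (none : Nd V)) : Nd V × Nd V) Ft) := by
            refine ⟨gd_insert (vld_sink hvY hvu) ?_ hGd, ?_⟩
            · intro h
              exact vi_ne_vo ((congrArg Prod.fst h).symm)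
            · intro v'
              by_cases hvx' : v' = x
              · rw [hvx']
                refine ⟨?_, ?_, ?_, ?_⟩
                · intro a _ _
                  exact Set.mem_insert_of_mem _ hvx
                · intro _
                  obtain ⟨a, haFt, h2⟩ := hin
                  exact ⟨a, Set.mem_insert_of_mem _ haFt, h2⟩
                · intro a ha a' ha' h2 h2'
                  have hma : a ∈ Ft := by
                    rcases ha with h | h
                    · exact absurd ((congrArg Prod.snd h).symm.trans h2) none_ne_vi
                    · exact h
                  have hma' : a' ∈ Ft := by
                    rcases ha' with h | h
                    · exact absurd ((congrArg Prod.snd h).symm.trans h2') none_ne_vi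
                    · exact h
                  exact hinu a hma a' hma' h2 h2'
                · intro _
                  refine ⟨?_, ?_, ?_⟩
                  · intro a _ _
                    exact Set.mem_insert_of_mem _ hvx
                  · intro _
                    exact ⟨((vo x, (none : Nd V)) : Nd V × Nd V), Set.mem_insert _ _, rfl⟩
                  · intro a ha a' ha' h1 h1'
                    have hma : a = ((vo x, (none : Nd V)) : Nd V × Nd V) := by
                      rcases ha with h | h
                      · exact h
                      · exact absurd h1 (hno a h)
                    have hma' : a' = ((vo x, (none : Nd V)) : Nd V × Nd V) := by
                      rcases ha' with h | h
                      · exact h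
                      · exact absurd h1' (hno a' h)
                    rw [hma, hma']
              · refine cv_insert ⟨?_, ?_, ?_, ?_⟩ (hcv v' hvx')
                · exact vo_ne_vi
                · exact none_ne_vi
                · exact fun h => hvx' (vo_inj.mp h).symm
                · exact none_ne_vo
          refine ⟨insert ((vo x, (none : Nd V)) : Nd V × Nd V) Ft, hflow, pres_insert ?_⟩
          exact fun h => hxu (vo_inj.mp h)
      · -- backward step: remove the vertex arc of x
        have hq : q = vi x := vld_into_vo (hF0.1.2.1 _ harc)
        subst hq
        have hpend' : Pend G u Y F0 (Ft \ {((vi x, vo x) : Nd V × Nd V)}) (vi x) := by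
          refine Or.inl ⟨x, rfl, Or.inl ⟨hxu, gd_diff hGd, ?_, ?_, ?_, ?_, ?_, ?_⟩⟩
          · intro v hv
            refine cv_diff ⟨?_, ?_, ?_, ?_⟩ (hcv v hv)
            · exact fun h => hv (vi_inj.mp h).symm
            · exact vo_ne_vi
            · exact vi_ne_vo
            · exact fun h => hv (vo_inj.mp h).symm
          · exact fun h => h.2 rfl
          · obtain ⟨a, haFt, h2⟩ := hin
            refine ⟨a, ⟨haFt, fun h => ?_⟩, h2⟩
            rw [Set.mem_singleton_iff] at h
            exact vo_ne_vi (((congrArg Prod.snd h).symm.trans h2))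
          · intro a ha a' ha' h2 h2'
            exact hinu a ha.1 a' ha'.1 h2 h2'
          · intro a ha h1
            exact hno a ha.1 h1
          · intro a haF0 h2
            refine ⟨(hINVq a (Or.inr h2)).mpr haF0, fun h => ?_⟩
            rw [Set.mem_singleton_iff] at h
            exact vo_ne_vi (((congrArg Prod.snd h).symm.trans h2))
        have hINV' := inv_update (F0 := F0) (l' := l') (b := ((vi x, vo x) : Nd V × Nd V)) hqnotin hpnotin'
          hINVl' (fun a hab => mem_diff_iff_of_ne hab)
        obtain ⟨Ff, hFf, hpres⟩ :=
          ih (vi x) (Ft \ {((vi x, vo x) : Nd V × Nd V)}) hchain' hlast' hnodup' hvou' hINV' hpend'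
        exact ⟨Ff, hFf, fun a ha => (hpres a ha).trans (pres_diff vi_ne_vo a ha)⟩

end AugStep


section Augment

variable {F0 : Set (Nd V × Nd V)}

lemma augment (hF0 : Flow G u Y F0) {k : ℕ}
    (hval : {a : Nd V × Nd V | a ∈ F0 ∧ a.1 = vo u}.ncard < k)
    (hsep : ∀ S : Set V, S.Finite → S.ncard < k → u ∉ S →
      ∃ y ∈ Y, y ∉ S ∧ y ≠ u ∧ ∃ w : G.Walk u y, ∀ x ∈ w.support, x ∉ S) :
    ∃ F1, Flow G u Y F1 ∧
      {a : Nd V × Nd V | a ∈ F1 ∧ a.1 = vo u}.ncard =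
        {a : Nd V × Nd V | a ∈ F0 ∧ a.1 = vo u}.ncard + 1 := by
  classical
  have hT := t_reachable hF0 hval hsep
  obtain ⟨l, hchain, hlast, hnodup⟩ := exists_nodup_chain hT
  cases l with
  | nil =>
    exfalso
    simp only [List.getLast_singleton] at hlast
    exact vo_ne_none hlast
  | cons q l' =>
    have hstep0 : Rd G u Y F0 (vo u) q := (List.chain_cons.mp hchain).1
    rcases hstep0 with ⟨hvld, hnF0⟩ | harc
    · rcases hvld with ⟨v, h1, h2⟩ | ⟨v, w1, hadj, h1, h2⟩ | ⟨v, hvY, hvu, h1, h2⟩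
      · exact absurd h1 vo_ne_vi
      · -- edge arc from the source
        have hveq : u = v := vo_inj.mp h1
        rw [← hveq] at hadj
        subst h2
        have hw1u : w1 ≠ u := fun h => G.irrefl (h ▸ hadj)
        have hchain' : List.Chain (Rd G u Y F0) (vi w1) l' := (List.chain_cons.mp hchain).2
        have hlast' : (vi w1 :: l').getLast (List.cons_ne_nil _ _) = (none : Nd V) := by
          rw [← hlast, List.getLast_cons (List.cons_ne_nil _ l')]
        have hnodup' : (vi w1 :: l').Nodup := (List.nodup_cons.mp hnodup).2
        have hvou' : vo u ∉ vi w1 :: l' := (List.nodup_cons.mp hnodup).1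
        have hcv' : ∀ v', v' ≠ w1 → Cv u (insert ((vo u, vi w1) : Nd V × Nd V) F0) v' := by
          intro v' hv'
          by_cases hvu' : v' = u
          · subst hvu'
            refine ⟨?_, ?_, ?_, ?_⟩
            · intro a ha h2
              have haF0 : a ∈ F0 := by
                rcases ha with h | h
                · exact absurd ((congrArg Prod.snd h).symm.trans h2)
                    (fun hh => hw1u (vi_inj.mp hh))
                · exact h
              exact Set.mem_insert_of_mem _ ((hF0.2 v').1 a haF0 h2)
            · intro h
              have : ((vi v', vo v') : Nd V × Nd V) ∈ F0 := by
                rcases h with h | h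
                · exact absurd (congrArg Prod.fst h) vi_ne_vo
                · exact h
              obtain ⟨a, ha, h2⟩ := (hF0.2 v').2.1 this
              exact ⟨a, Set.mem_insert_of_mem _ ha, h2⟩
            · intro a ha a' ha' h2 h2'
              have haF0 : a ∈ F0 := by
                rcases ha with h | h
                · exact absurd ((congrArg Prod.snd h).symm.trans h2)
                    (fun hh => hw1u (vi_inj.mp hh))
                · exact h
              have haF0' : a' ∈ F0 := by
                rcases ha' with h | h
                · exact absurd ((congrArg Prod.snd h).symm.trans h2')
                    (fun hh => hw1u (vi_inj.mp hh))
                · exact h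
              exact (hF0.2 v').2.2.1 a haF0 a' haF0' h2 h2'
            · intro h
              exact absurd rfl h
          · refine cv_insert ⟨?_, ?_, ?_, ?_⟩ (hF0.2 v')
            · exact vo_ne_vi
            · exact fun h => hv' (vi_inj.mp h).symm
            · exact fun h => hvu' (vo_inj.mp h).symm
            · exact vi_ne_vo
        have hpend : Pend G u Y F0 (insert ((vo u, vi w1) : Nd V × Nd V) F0) (vi w1) :=
          Or.inl ⟨w1, rfl, arrive hF0 hnF0 hadj hw1u hF0.1 hcv'
            (fun a _ => Iff.rfl) (hF0.2 w1)⟩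
        have hINV' := inv_update (F0 := F0) (l' := l') (b := ((vo u, vi w1) : Nd V × Nd V))
          (fun h => hvou' (List.mem_cons_of_mem _ h))
          ((List.nodup_cons.mp hnodup').1)
          (fun a _ => Iff.rfl)
          (fun a hab => mem_insert_iff_of_ne hab)
        obtain ⟨Ff, hFf, hpres⟩ := augStep hF0 l' (vi w1)
          (insert ((vo u, vi w1) : Nd V × Nd V) F0)
          hchain' hlast' hnodup' hvou' hINV' hpend
        refine ⟨Ff, hFf, ?_⟩
        have hseteq : {a : Nd V × Nd V | a ∈ Ff ∧ a.1 = vo u} =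
            insert ((vo u, vi w1) : Nd V × Nd V) {a : Nd V × Nd V | a ∈ F0 ∧ a.1 = vo u} := by
          ext a
          simp only [Set.mem_setOf_eq, Set.mem_insert_iff]
          constructor
          · intro ⟨haFf, ha1⟩
            have := (hpres a ha1).mp haFf
            rcases this with h | h
            · exact Or.inl h
            · exact Or.inr ⟨h, ha1⟩
          · intro h
            rcases h with h | ⟨haF0, ha1⟩
            · subst h
              exact ⟨(hpres _ rfl).mpr (Set.mem_insert _ _), rfl⟩
            · exact ⟨(hpres a ha1).mpr (Set.mem_insert_of_mem _ haF0), ha1⟩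
        rw [hseteq]
        refine Set.ncard_insert_of_notMem ?_ (hF0.1.1.subset (fun a ha => ha.1))
        intro h
        exact hnF0 h.1
      · exact absurd (vo_inj.mp h1) (fun h => hvu h.symm)
    · exact absurd harc (fun h => no_into_source hF0.1 h)

lemma flow_empty : Flow G u Y (∅ : Set (Nd V × Nd V)) := by
  refine ⟨⟨Set.finite_empty, ?_, ?_⟩, ?_⟩
  · intro a ha
    exact absurd ha (Set.notMem_empty a)
  · exact Set.notMem_empty _
  · intro v
    refine ⟨?_, ?_, ?_, ?_⟩
    · intro a ha
      exact absurd ha (Set.notMem_empty a)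
    · intro h
      exact absurd h (Set.notMem_empty _)
    · intro a ha
      exact absurd ha (Set.notMem_empty a)
    · intro _
      refine ⟨?_, ?_, ?_⟩
      · intro a ha
        exact absurd ha (Set.notMem_empty a)
      · intro h
        exact absurd h (Set.notMem_empty _)
      · intro a ha
        exact absurd ha (Set.notMem_empty a)

lemma exists_flow (k : ℕ)
    (hsep : ∀ S : Set V, S.Finite → S.ncard < k → u ∉ S →
      ∃ y ∈ Y, y ∉ S ∧ y ≠ u ∧ ∃ w : G.Walk u y, ∀ x ∈ w.support, x ∉ S) :
    ∀ j, j ≤ k → ∃ F : Set (Nd V × Nd V), Flow G u Y F ∧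
      {a : Nd V × Nd V | a ∈ F ∧ a.1 = vo u}.ncard = j := by
  intro j
  induction j with
  | zero =>
    intro _
    refine ⟨∅, flow_empty, ?_⟩
    have : {a : Nd V × Nd V | a ∈ (∅ : Set (Nd V × Nd V)) ∧ a.1 = vo u} = ∅ := by
      ext a
      simp
    rw [this, Set.ncard_empty]
  | succ j ihj =>
    intro hjk
    obtain ⟨F0, hF0, hcard⟩ := ihj (Nat.le_of_succ_le hjk)
    obtain ⟨F1, hF1, hcard1⟩ := augment hF0 (by omega) hsep
    exact ⟨F1, hF1, by omega⟩

lemma fan_exists (k : ℕ)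
    (hsep : ∀ S : Set V, S.Finite → S.ncard < k → u ∉ S →
      ∃ y ∈ Y, y ∉ S ∧ y ≠ u ∧ ∃ w : G.Walk u y, ∀ x ∈ w.support, x ∉ S) :
    ∃ Fs : Set V, IsFan G k u Y Fs := by
  obtain ⟨F, hF, hcard⟩ := exists_flow k hsep k le_rfl
  exact fan_of_flow hF hcard

end Augment

end StFlow

/-- Every locally finite `k`-connected graph is `k`-padded at infinity. -/
theorem stmt_17 (k : ℕ) (hk : 0 < k) (G : SimpleGraph V)
    (hlf : ∀ x : V, (G.neighborSet x).Finite) (hconn : KConnected G k) :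
    PaddedAtInfinity G k := by
  intro R hR R' hR' hEq
  refine ⟨∅, Set.finite_empty, ?_⟩
  intro v _
  have hYinf : (Set.range R').Infinite := Set.infinite_range_of_injective hR'.1
  have hsep : ∀ S : Set V, S.Finite → S.ncard < k → v ∉ S →
      ∃ y ∈ Set.range R', y ∉ S ∧ y ≠ v ∧ ∃ w : G.Walk v y, ∀ x ∈ w.support, x ∉ S := by
    intro S hSfin hScard hvS
    have hconn' := hconn.2 S hSfin hScard
    have hYne : (Set.range R' \ (S ∪ {v})).Nonempty :=
      (hYinf.diff (hSfin.union (Set.finite_singleton v))).nonempty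
    obtain ⟨y, hyR, hyn⟩ := hYne
    have hyS : y ∉ S := fun h => hyn (Set.mem_union_left _ h)
    have hyv : y ≠ v := fun h => hyn (Set.mem_union_right _ (by simp [h]))
    have hv' : v ∈ (Sᶜ : Set V) := hvS
    have hy' : y ∈ (Sᶜ : Set V) := hyS
    have hreach : (G.induce (Sᶜ : Set V)).Reachable ⟨v, hv'⟩ ⟨y, hy'⟩ :=
      hconn'.preconnected _ _
    obtain ⟨w0⟩ := hreach
    refine ⟨y, hyR, hyS, hyv,
      w0.map (SimpleGraph.Embedding.induce (Sᶜ : Set V)).toHom, ?_⟩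
    intro x hx
    replace hx := (SimpleGraph.Walk.support_map (SimpleGraph.Embedding.induce (Sᶜ : Set V)).toHom w0).subst
      (motive := fun l => x ∈ l) hx
    obtain ⟨x', _, rfl⟩ := List.mem_map.mp hx
    exact x'.2
  exact StFlow.fan_exists (G := G) (u := v) (Y := Set.range R') k hsep
end

section
/- There exist a locally finite 2-connected simple graph G and an edge set D ⊆ E(G) such that D ∩ B is finite and of even cardinality for every bond B of G, but D ∩ C is infinite for some cut C of G. -/
open Set

variable {V : Type*}

namespace Stmt18
abbrev W4 : Type := ℕ × Fin 4
def vc (n : ℕ) : W4 := (n, 0)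
def vp (n : ℕ) : W4 := (n, 1)
def vq (n : ℕ) : W4 := (n, 2)
def vu (n : ℕ) : W4 := (n, 3)
def Rel (a b : W4) : Prop :=
  (∃ n, a = vc n ∧ b = vp n) ∨ (∃ n, a = vc n ∧ b = vq n) ∨
  (∃ n, a = vp n ∧ b = vc (n+1)) ∨ (∃ n, a = vq n ∧ b = vc (n+1)) ∨
  (∃ n, a = vu n ∧ b = vu (n+1)) ∨ (∃ n, a = vu n ∧ b = vc n)
lemma rel_ne {a b : W4} (h : Rel a b) : a ≠ b := by
  rintro rfl
  rcases h with ⟨n,h1,h2⟩|⟨n,h1,h2⟩|⟨n,h1,h2⟩|⟨n,h1,h2⟩|⟨n,h1,h2⟩|⟨n,h1,h2⟩ <;>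
    rw [h1] at h2 <;> simp [vc,vp,vq,vu, Prod.ext_iff] at h2
def GG : SimpleGraph W4 where
  Adj a b := Rel a b ∨ Rel b a
  symm := ⟨fun a b h => h.symm⟩
  loopless := ⟨fun a h => by rcases h with h|h <;> exact rel_ne h rfl⟩


lemma adj_cp (n : ℕ) : GG.Adj (vc n) (vp n) := Or.inl (Or.inl ⟨n, rfl, rfl⟩)
lemma adj_cq (n : ℕ) : GG.Adj (vc n) (vq n) := Or.inl (Or.inr (Or.inl ⟨n, rfl, rfl⟩))
lemma adj_pc (n : ℕ) : GG.Adj (vp n) (vc (n+1)) := Or.inl (Or.inr (Or.inr (Or.inl ⟨n, rfl, rfl⟩)))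
lemma adj_qc (n : ℕ) : GG.Adj (vq n) (vc (n+1)) := Or.inl (Or.inr (Or.inr (Or.inr (Or.inl ⟨n, rfl, rfl⟩))))
lemma adj_uu (n : ℕ) : GG.Adj (vu n) (vu (n+1)) := Or.inl (Or.inr (Or.inr (Or.inr (Or.inr (Or.inl ⟨n, rfl, rfl⟩)))))
lemma adj_uc (n : ℕ) : GG.Adj (vu n) (vc n) := Or.inl (Or.inr (Or.inr (Or.inr (Or.inr (Or.inr ⟨n, rfl, rfl⟩)))))

lemma adj_vp_cases' : True := trivial

lemma adj_vp_cases {n : ℕ} {w : W4} (h : GG.Adj (vp n) w) : w = vc n ∨ w = vc (n+1) := by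
  rcases h with (⟨m,h1,h2⟩|⟨m,h1,h2⟩|⟨m,h1,h2⟩|⟨m,h1,h2⟩|⟨m,h1,h2⟩|⟨m,h1,h2⟩)|
    (⟨m,h1,h2⟩|⟨m,h1,h2⟩|⟨m,h1,h2⟩|⟨m,h1,h2⟩|⟨m,h1,h2⟩|⟨m,h1,h2⟩) <;>
    simp_all [vc,vp,vq,vu, Prod.ext_iff]

lemma adj_vq_cases {n : ℕ} {w : W4} (h : GG.Adj (vq n) w) : w = vc n ∨ w = vc (n+1) := by
  rcases h with (⟨m,h1,h2⟩|⟨m,h1,h2⟩|⟨m,h1,h2⟩|⟨m,h1,h2⟩|⟨m,h1,h2⟩|⟨m,h1,h2⟩)|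
    (⟨m,h1,h2⟩|⟨m,h1,h2⟩|⟨m,h1,h2⟩|⟨m,h1,h2⟩|⟨m,h1,h2⟩|⟨m,h1,h2⟩) <;>
    simp_all [vc,vp,vq,vu, Prod.ext_iff]

lemma adj_cross {k : ℕ} {a b : W4} (h : GG.Adj a b) (hk : a.1 ≤ k) (hk' : k + 1 ≤ b.1) :
    b = vc (k+1) ∨ (a = vu k ∧ b = vu (k+1)) := by
  rcases h with (⟨m,h1,h2⟩|⟨m,h1,h2⟩|⟨m,h1,h2⟩|⟨m,h1,h2⟩|⟨m,h1,h2⟩|⟨m,h1,h2⟩)|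
    (⟨m,h1,h2⟩|⟨m,h1,h2⟩|⟨m,h1,h2⟩|⟨m,h1,h2⟩|⟨m,h1,h2⟩|⟨m,h1,h2⟩) <;>
    subst h1 <;> subst h2 <;>
    simp_all [vc,vp,vq,vu, Prod.ext_iff] <;> omega

lemma adj_level {a b : W4} (h : GG.Adj a b) : b.1 ≤ a.1 + 1 ∧ a.1 ≤ b.1 + 1 := by
  rcases h with (⟨m,h1,h2⟩|⟨m,h1,h2⟩|⟨m,h1,h2⟩|⟨m,h1,h2⟩|⟨m,h1,h2⟩|⟨m,h1,h2⟩)|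
    (⟨m,h1,h2⟩|⟨m,h1,h2⟩|⟨m,h1,h2⟩|⟨m,h1,h2⟩|⟨m,h1,h2⟩|⟨m,h1,h2⟩) <;>
    subst h1 <;> subst h2 <;> simp [vc,vp,vq,vu] <;> omega

end Stmt18
-- reopen
namespace Stmt18

/-- reachability within a vertex set -/
def Rin (X : Set W4) (a b : W4) : Prop :=
  ∃ w : GG.Walk a b, ∀ x ∈ w.support, x ∈ X

lemma Rin.refl {X : Set W4} {a : W4} (ha : a ∈ X) : Rin X a a :=
  ⟨SimpleGraph.Walk.nil, by simpa using ha⟩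

lemma Rin.symm {X : Set W4} {a b : W4} (h : Rin X a b) : Rin X b a := by
  obtain ⟨w, hw⟩ := h
  exact ⟨w.reverse, by simpa [SimpleGraph.Walk.support_reverse] using hw⟩

lemma Rin.trans {X : Set W4} {a b c : W4} (h : Rin X a b) (h' : Rin X b c) : Rin X a c := by
  obtain ⟨w, hw⟩ := h; obtain ⟨w', hw'⟩ := h'
  refine ⟨w.append w', fun x hx => ?_⟩
  rcases (SimpleGraph.Walk.mem_support_append_iff _ _).1 hx with hx|hx
  exacts [hw x hx, hw' x hx]

lemma Rin.step {X : Set W4} {a b : W4} (ha : a ∈ X) (hb : b ∈ X) (hadj : GG.Adj a b) :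
    Rin X a b :=
  ⟨hadj.toWalk, by simp [ha, hb]⟩

lemma Rin.mono {X Y : Set W4} (hXY : X ⊆ Y) {a b : W4} (h : Rin X a b) : Rin Y a b := by
  obtain ⟨w, hw⟩ := h; exact ⟨w, fun x hx => hXY (hw x hx)⟩

lemma Rin.mem_left {X : Set W4} {a b : W4} (h : Rin X a b) : a ∈ X := by
  obtain ⟨w, hw⟩ := h; exact hw a w.start_mem_support

lemma Rin.mem_right {X : Set W4} {a b : W4} (h : Rin X a b) : b ∈ X := by
  obtain ⟨w, hw⟩ := h; exact hw b w.end_mem_support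

/-- prefix reachability -/
lemma Rin.prefix {X : Set W4} {a b z : W4} (h : Rin X a b) (hz : ∃ w : GG.Walk a b, (∀ x ∈ w.support, x ∈ X) ∧ z ∈ w.support) : Rin X a z := by
  obtain ⟨w, hw, hzw⟩ := hz
  exact ⟨w.takeUntil z hzw, fun x hx => hw x (w.support_takeUntil_subset hzw hx)⟩

lemma Rin.cases_head {X : Set W4} {a b : W4} (h : Rin X a b) :
    b = a ∨ ∃ z, z ∈ X ∧ GG.Adj a z := by
  obtain ⟨w, hw⟩ := h
  cases w with
  | nil => exact Or.inl rfl
  | cons hadj rest =>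
      exact Or.inr ⟨_, hw _ (by simp), hadj⟩

end Stmt18
namespace Stmt18

/-- crossing lemma: a connected set having vertices on both sides of level k
    contains `vc (k+1)` or both `vu k, vu (k+1)`. -/
lemma crossing {X : Set W4} {z z' : W4} (h : Rin X z z') {k : ℕ}
    (hz : z.1 ≤ k) (hz' : k + 1 ≤ z'.1) :
    vc (k+1) ∈ X ∨ (vu k ∈ X ∧ vu (k+1) ∈ X) := by
  obtain ⟨w, hw⟩ := h
  obtain ⟨d, hd, hfst, hsnd⟩ := w.exists_boundary_dart {v : W4 | v.1 ≤ k} hz (by simp; omega)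
  have hadj : GG.Adj d.fst d.snd := d.adj
  have h1 : d.fst.1 ≤ k := hfst
  have h2 : k + 1 ≤ d.snd.1 := by simpa using hsnd
  have hfs : d.fst ∈ X := hw _ (SimpleGraph.Walk.dart_fst_mem_support_of_mem_darts _ hd)
  have hss : d.snd ∈ X := hw _ (SimpleGraph.Walk.dart_snd_mem_support_of_mem_darts _ hd)
  rcases adj_cross hadj h1 h2 with h|⟨ha, hb⟩
  · exact Or.inl (h ▸ hss)
  · exact Or.inr ⟨ha ▸ hfs, hb ▸ hss⟩

/-- one step up, avoiding s -/
lemma route_up (s : W4) : ∀ v : W4, v ≠ s →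
    ∃ w : W4, w.1 = v.1 + 1 ∧ Rin {s}ᶜ v w := by
  rintro ⟨n, i⟩ hv
  have hne : ∀ a : W4, a ≠ s → (a ∈ ({s}ᶜ : Set W4)) := fun a ha => ha
  fin_cases i
  · -- vc n
    by_cases h1 : s = vc (n+1)
    · refine ⟨vu (n+1), rfl, ?_⟩
      have e1 : Rin {s}ᶜ (vc n) (vu n) := Rin.step (hne _ hv) (hne _ (by subst h1; simp [vu,vc, Prod.ext_iff])) (adj_uc n).symm
      have e2 : Rin {s}ᶜ (vu n) (vu (n+1)) := Rin.step (e1.mem_right) (hne _ (by subst h1; simp [vu,vc, Prod.ext_iff])) (adj_uu n)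
      exact e1.trans e2
    · by_cases h2 : s = vp n
      · refine ⟨vc (n+1), rfl, ?_⟩
        have e1 : Rin {s}ᶜ (vc n) (vq n) := Rin.step (hne _ hv) (hne _ (by subst h2; simp [vq,vp, Prod.ext_iff])) (adj_cq n)
        have e2 : Rin {s}ᶜ (vq n) (vc (n+1)) := Rin.step e1.mem_right (hne _ (fun h => h1 h.symm)) (adj_qc n)
        exact e1.trans e2
      · refine ⟨vc (n+1), rfl, ?_⟩
        have e1 : Rin {s}ᶜ (vc n) (vp n) := Rin.step (hne _ hv) (hne _ (fun h => h2 h.symm)) (adj_cp n)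
        have e2 : Rin {s}ᶜ (vp n) (vc (n+1)) := Rin.step e1.mem_right (hne _ (fun h => h1 h.symm)) (adj_pc n)
        exact e1.trans e2
  · -- vp n
    by_cases h1 : s = vc (n+1)
    · refine ⟨vu (n+1), rfl, ?_⟩
      have e1 : Rin {s}ᶜ (vp n) (vc n) := Rin.step (hne _ hv) (hne _ (by subst h1; simp [vc, Prod.ext_iff])) (adj_cp n).symm
      have e2 : Rin {s}ᶜ (vc n) (vu n) := Rin.step e1.mem_right (hne _ (by subst h1; simp [vu,vc, Prod.ext_iff])) (adj_uc n).symm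
      have e3 : Rin {s}ᶜ (vu n) (vu (n+1)) := Rin.step e2.mem_right (hne _ (by subst h1; simp [vu,vc, Prod.ext_iff])) (adj_uu n)
      exact (e1.trans e2).trans e3
    · exact ⟨vc (n+1), rfl, Rin.step (hne _ hv) (hne _ (fun h => h1 h.symm)) (adj_pc n)⟩
  · -- vq n
    by_cases h1 : s = vc (n+1)
    · refine ⟨vu (n+1), rfl, ?_⟩
      have e1 : Rin {s}ᶜ (vq n) (vc n) := Rin.step (hne _ hv) (hne _ (by subst h1; simp [vc, Prod.ext_iff])) (adj_cq n).symm
      have e2 : Rin {s}ᶜ (vc n) (vu n) := Rin.step e1.mem_right (hne _ (by subst h1; simp [vu,vc, Prod.ext_iff])) (adj_uc n).symm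
      have e3 : Rin {s}ᶜ (vu n) (vu (n+1)) := Rin.step e2.mem_right (hne _ (by subst h1; simp [vu,vc, Prod.ext_iff])) (adj_uu n)
      exact (e1.trans e2).trans e3
    · exact ⟨vc (n+1), rfl, Rin.step (hne _ hv) (hne _ (fun h => h1 h.symm)) (adj_qc n)⟩
  · -- vu n
    by_cases h1 : s = vu (n+1)
    · refine ⟨vc (n+1), rfl, ?_⟩
      have e1 : Rin {s}ᶜ (vu n) (vc n) := Rin.step (hne _ hv) (hne _ (by subst h1; simp [vu,vc, Prod.ext_iff])) (adj_uc n)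
      have e2 : Rin {s}ᶜ (vc n) (vp n) := Rin.step e1.mem_right (hne _ (by subst h1; simp [vu,vp, Prod.ext_iff])) (adj_cp n)
      have e3 : Rin {s}ᶜ (vp n) (vc (n+1)) := Rin.step e2.mem_right (hne _ (by subst h1; simp [vu,vc, Prod.ext_iff])) (adj_pc n)
      exact (e1.trans e2).trans e3
    · exact ⟨vu (n+1), rfl, Rin.step (hne _ hv) (hne _ (fun h => h1 h.symm)) (adj_uu n)⟩

end Stmt18
namespace Stmt18

def tail (L : ℕ) : Set W4 := {x | L ≤ x.1}

lemma tail_step (L : ℕ) : ∀ v : W4, L ≤ v.1 → Rin (tail L) v (vc (v.1 + 1)) := by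
  rintro ⟨n, i⟩ hn
  have hn' : L ≤ n := hn
  fin_cases i
  · have e1 : Rin (tail L) (vc n) (vp n) := Rin.step hn' hn' (adj_cp n)
    have e2 : Rin (tail L) (vp n) (vc (n+1)) := Rin.step hn' (by simp [tail, vc]; omega) (adj_pc n)
    exact e1.trans e2
  · exact Rin.step hn' (by simp [tail, vc]; omega) (adj_pc n)
  · exact Rin.step hn' (by simp [tail, vc]; omega) (adj_qc n)
  · have e1 : Rin (tail L) (vu n) (vc n) := Rin.step hn' hn' (adj_uc n)
    have e2 : Rin (tail L) (vc n) (vp n) := Rin.step hn' hn' (adj_cp n)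
    have e3 : Rin (tail L) (vp n) (vc (n+1)) := Rin.step hn' (by simp [tail, vc]; omega) (adj_pc n)
    exact (e1.trans e2).trans e3

lemma tail_chain (L : ℕ) (n : ℕ) (hn : L ≤ n) : ∀ d : ℕ, Rin (tail L) (vc n) (vc (n + d)) := by
  intro d
  induction d with
  | zero => exact Rin.refl hn
  | succ d ih =>
      have := tail_step L (vc (n+d)) (by simp [vc]; omega)
      exact ih.trans (by simpa [vc, add_assoc] using this)

lemma tail_conn (L : ℕ) : ∀ v w : W4, L ≤ v.1 → L ≤ w.1 → Rin (tail L) v w := by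
  intro v w hv hw
  have h1 : Rin (tail L) v (vc (v.1 + 1)) := tail_step L v hv
  have h2 : Rin (tail L) w (vc (w.1 + 1)) := tail_step L w hw
  set M := max (v.1 + 1) (w.1 + 1) with hM
  obtain ⟨d1, hd1⟩ : ∃ d, M = v.1 + 1 + d := ⟨M - (v.1+1), by omega⟩
  obtain ⟨d2, hd2⟩ : ∃ d, M = w.1 + 1 + d := ⟨M - (w.1+1), by omega⟩
  have c1 : Rin (tail L) (vc (v.1+1)) (vc M) := hd1 ▸ tail_chain L (v.1+1) (by omega) d1
  have c2 : Rin (tail L) (vc (w.1+1)) (vc M) := hd2 ▸ tail_chain L (w.1+1) (by omega) d2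
  exact ((h1.trans c1).trans c2.symm).trans h2.symm

lemma up_chain (s : W4) : ∀ (m : ℕ) (v : W4), v ≠ s → ∃ w : W4, w.1 = v.1 + m ∧ Rin {s}ᶜ v w := by
  intro m
  induction m with
  | zero => exact fun v hv => ⟨v, rfl, Rin.refl hv⟩
  | succ m ih =>
      intro v hv
      obtain ⟨w, hw1, hw2⟩ := ih v hv
      obtain ⟨w', hw'1, hw'2⟩ := route_up s w hw2.mem_right
      exact ⟨w', by omega, hw2.trans hw'2⟩

lemma tail_subset_compl (s : W4) : tail (s.1 + 1) ⊆ ({s}ᶜ : Set W4) := by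
  intro x hx
  have : s.1 + 1 ≤ x.1 := hx
  intro h
  rw [Set.mem_singleton_iff] at h
  subst h; omega

/-- pairwise connectivity avoiding one vertex -/
lemma conn_avoiding (s : W4) : ∀ v w : W4, v ≠ s → w ≠ s → Rin {s}ᶜ v w := by
  intro v w hv hw
  obtain ⟨v', hv'1, hv'2⟩ := up_chain s (s.1 + 1) v hv
  obtain ⟨w', hw'1, hw'2⟩ := up_chain s (s.1 + 1) w hw
  have ht : Rin {s}ᶜ v' w' := (tail_conn (s.1+1) v' w' (by omega) (by omega)).mono (tail_subset_compl s)
  exact (hv'2.trans ht).trans hw'2.symm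

/-- walks within X give reachability in the induced graph -/
lemma rin_to_induce {X : Set W4} {a b : W4} (h : Rin X a b) (ha : a ∈ X) (hb : b ∈ X) :
    (GG.induce X).Reachable ⟨a, ha⟩ ⟨b, hb⟩ := by
  obtain ⟨w, hw⟩ := h
  induction w with
  | nil => exact SimpleGraph.Reachable.refl _
  | @cons u z c hadj rest ih =>
      have hz : z ∈ X := hw z (by simp)
      have h1 : (GG.induce X).Adj ⟨u, ha⟩ ⟨z, hz⟩ := by
        simp [SimpleGraph.comap_adj]
        exact hadj
      exact (h1.reachable).trans (ih hz hb (fun x hx => hw x (by simp [hx])))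

lemma GG_preconnected : GG.Preconnected := by
  intro v w
  have hv : v ≠ ((v.1 + w.1 + 1, 3) : W4) := by
    intro h; apply_fun Prod.fst at h; simp at h; omega
  have hw : w ≠ ((v.1 + w.1 + 1, 3) : W4) := by
    intro h; apply_fun Prod.fst at h; simp at h; omega
  obtain ⟨wk, _⟩ := conn_avoiding _ v w hv hw
  exact ⟨wk⟩

end Stmt18
namespace Stmt18

lemma neighborSet_finite (x : W4) : (GG.neighborSet x).Finite := by
  have hsub : GG.neighborSet x ⊆ (Set.Iic (x.1 + 1)) ×ˢ (Set.univ : Set (Fin 4)) := by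
    intro y hy
    have := adj_level hy
    constructor
    · simp only [Set.mem_Iic]; omega
    · trivial
  exact Set.Finite.subset ((Set.finite_Iic _).prod Set.finite_univ) hsub

lemma GG_kconnected : ∀ S : Set W4, S.Finite → S.ncard < 2 → (GG.induce (Sᶜ : Set W4)).Connected := by
  intro S hSfin hS2
  obtain hS | ⟨s, hSs⟩ : S = ∅ ∨ ∃ a, S = {a} := by
    have := (Set.ncard_le_one_iff_eq hSfin).1 (by omega)
    tauto
  · subst hS
    have hne : Nonempty ((∅ᶜ : Set W4)) := ⟨⟨vc 0, by simp⟩⟩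
    rw [SimpleGraph.connected_iff]
    refine ⟨fun a b => ?_, hne⟩
    obtain ⟨a, ha⟩ := a; obtain ⟨b, hb⟩ := b
    have hA : a ≠ ((a.1 + b.1 + 1, 3) : W4) := by
      intro h; apply_fun Prod.fst at h; simp at h; omega
    have hB : b ≠ ((a.1 + b.1 + 1, 3) : W4) := by
      intro h; apply_fun Prod.fst at h; simp at h; omega
    have := (conn_avoiding _ a b hA hB).mono (by intro z hz; simp : ({((a.1 + b.1 + 1, 3) : W4)}ᶜ : Set W4) ⊆ (∅ᶜ : Set W4))
    exact rin_to_induce this ha hb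
  · subst hSs
    have hne : Nonempty (({s}ᶜ : Set W4)) := by
      refine ⟨⟨vc (s.1 + 1), ?_⟩⟩
      intro h; rw [Set.mem_singleton_iff] at h; apply_fun Prod.fst at h; simp [vc] at h
    rw [SimpleGraph.connected_iff]
    refine ⟨fun a b => ?_, hne⟩
    obtain ⟨a, ha⟩ := a; obtain ⟨b, hb⟩ := b
    exact rin_to_induce (conn_avoiding s a b ha hb) ha hb

/-- the four edges of diamond n -/
def dE (n : ℕ) : Set (Sym2 W4) :=
  {s(vc n, vp n), s(vp n, vc (n+1)), s(vc n, vq n), s(vq n, vc (n+1))}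

def DD : Set (Sym2 W4) := ⋃ n, dE n

lemma DD_subset_edgeSet : DD ⊆ GG.edgeSet := by
  intro e he
  obtain ⟨n, hn⟩ : ∃ n, e ∈ dE n := by simpa [DD] using he
  rcases hn with h|h|h|h <;> subst h <;> simp [SimpleGraph.mem_edgeSet]
  exacts [adj_cp n, adj_pc n, adj_cq n, adj_qc n]

lemma mem_cutEdges_iff {A : Set W4} {a b : W4} (hab : GG.Adj a b) :
    s(a, b) ∈ cutEdges GG A ↔ ((a ∈ A ∧ b ∉ A) ∨ (b ∈ A ∧ a ∉ A)) := by
  constructor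
  · rintro ⟨x, y, hxy, hx, hy, he⟩
    rw [Sym2.eq_iff] at he
    rcases he with ⟨rfl, rfl⟩ | ⟨rfl, rfl⟩
    · exact Or.inl ⟨hx, hy⟩
    · exact Or.inr ⟨hx, hy⟩
  · rintro (⟨ha, hb⟩ | ⟨hb, ha⟩)
    · exact ⟨a, b, hab, ha, hb, rfl⟩
    · exact ⟨b, a, hab.symm, hb, ha, Sym2.eq_swap⟩

lemma not_mem_cut_of_both {A : Set W4} {a b : W4} (hab : GG.Adj a b)
    (ha : a ∈ A ↔ b ∈ A) : s(a, b) ∉ cutEdges GG A := by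
  rw [mem_cutEdges_iff hab]; tauto

end Stmt18
namespace Stmt18

noncomputable def idx : Sym2 W4 → ℕ :=
  Sym2.lift ⟨fun a b => min a.1 b.1, fun a b => min_comm _ _⟩

lemma idx_mk (a b : W4) : idx s(a, b) = min a.1 b.1 := rfl

lemma idx_dE {e : Sym2 W4} {n : ℕ} (h : e ∈ dE n) : idx e = n := by
  rcases h with h|h|h|h <;> subst h <;> simp [idx_mk, vc, vp, vq] <;> omega

lemma dE_subset_DD (n : ℕ) : dE n ⊆ DD := Set.subset_iUnion dE n

lemma dE_finite (n : ℕ) : (dE n).Finite := by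
  unfold dE
  exact (((Set.finite_singleton _).insert _).insert _).insert _

open scoped Classical in
lemma ncard_four_inter {α : Type*} {a b c d : α} (S : Set α)
    (hab : a ≠ b) (hac : a ≠ c) (had : a ≠ d) (hbc : b ≠ c) (hbd : b ≠ d) (hcd : c ≠ d) :
    (({a, b, c, d} : Set α) ∩ S).ncard =
      (if a ∈ S then 1 else 0) + (if b ∈ S then 1 else 0) +
      (if c ∈ S then 1 else 0) + (if d ∈ S then 1 else 0) := by
  have h1 : ({a, b, c, d} : Set α) ∩ S = ({a} ∩ S) ∪ (({b} ∩ S) ∪ (({c} ∩ S) ∪ ({d} ∩ S))) := by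
    ext e
    simp only [Set.mem_inter_iff, Set.mem_insert_iff, Set.mem_singleton_iff, Set.mem_union]
    tauto
  have hsing : ∀ (x : α), (({x} : Set α) ∩ S).ncard = if x ∈ S then 1 else 0 := by
    intro x
    by_cases hx : x ∈ S
    · have h2 : ({x} : Set α) ∩ S = {x} := by simp [Set.inter_eq_left, hx]
      simp [h2, hx]
    · have h2 : ({x} : Set α) ∩ S = ∅ := by simp [hx]
      simp [h2, hx]
  have hfin : ∀ x : α, (({x} : Set α) ∩ S).Finite := fun x => (Set.finite_singleton x).inter_of_left S
  rw [h1]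
  rw [Set.ncard_union_eq (by
        simp only [Set.disjoint_left]
        rintro e ⟨he, _⟩ hmem
        simp only [Set.mem_singleton_iff] at he
        subst he
        rcases hmem with ⟨h,_⟩|⟨h,_⟩|⟨h,_⟩ <;> simp only [Set.mem_singleton_iff] at h <;> tauto)
      (hfin a) (((hfin b).union ((hfin c).union (hfin d))))]
  rw [Set.ncard_union_eq (by
        simp only [Set.disjoint_left]
        rintro e ⟨he, _⟩ hmem
        simp only [Set.mem_singleton_iff] at he
        subst he
        rcases hmem with ⟨h,_⟩|⟨h,_⟩ <;> simp only [Set.mem_singleton_iff] at h <;> tauto)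
      (hfin b) ((hfin c).union (hfin d))]
  rw [Set.ncard_union_eq (by
        simp only [Set.disjoint_left]
        rintro e ⟨he, _⟩ ⟨h, _⟩
        simp only [Set.mem_singleton_iff] at he h
        subst he; tauto)
      (hfin c) (hfin d)]
  rw [hsing a, hsing b, hsing c, hsing d]
  ring

end Stmt18
namespace Stmt18

lemma dE_even (A : Set W4) (n : ℕ) : Even ((dE n ∩ cutEdges GG A).ncard) := by
  classical
  have d12 : s(vc n, vp n) ≠ s(vp n, vc (n+1)) := by
    simp [Sym2.eq_iff, vc, vp, Prod.ext_iff]; try omega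
  have d13 : s(vc n, vp n) ≠ s(vc n, vq n) := by
    simp [Sym2.eq_iff, vc, vp, vq, Prod.ext_iff]
  have d14 : s(vc n, vp n) ≠ s(vq n, vc (n+1)) := by
    simp [Sym2.eq_iff, vc, vp, vq, Prod.ext_iff]; try omega
  have d23 : s(vp n, vc (n+1)) ≠ s(vc n, vq n) := by
    simp [Sym2.eq_iff, vc, vp, vq, Prod.ext_iff]; try omega
  have d24 : s(vp n, vc (n+1)) ≠ s(vq n, vc (n+1)) := by
    simp [Sym2.eq_iff, vc, vp, vq, Prod.ext_iff]
  have d34 : s(vc n, vq n) ≠ s(vq n, vc (n+1)) := by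
    simp [Sym2.eq_iff, vc, vq, Prod.ext_iff]; try omega
  have hiff1 := mem_cutEdges_iff (A := A) (adj_cp n)
  have hiff2 := mem_cutEdges_iff (A := A) (adj_pc n)
  have hiff3 := mem_cutEdges_iff (A := A) (adj_cq n)
  have hiff4 := mem_cutEdges_iff (A := A) (adj_qc n)
  have hcard := ncard_four_inter (cutEdges GG A) d12 d13 d14 d23 d24 d34
  show Even (({s(vc n, vp n), s(vp n, vc (n+1)), s(vc n, vq n), s(vq n, vc (n+1))} ∩ cutEdges GG A).ncard)
  rw [hcard]
  by_cases h1 : vc n ∈ A <;> by_cases h2 : vp n ∈ A <;>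
    by_cases h3 : vq n ∈ A <;> by_cases h4 : vc (n+1) ∈ A <;>
    simp [hiff1, hiff2, hiff3, hiff4, h1, h2, h3, h4] <;> decide

end Stmt18
namespace Stmt18

lemma biUnion_even (A : Set W4) (J : Finset ℕ) :
    (⋃ n ∈ J, (dE n ∩ cutEdges GG A)).Finite ∧ Even ((⋃ n ∈ J, (dE n ∩ cutEdges GG A)).ncard) := by
  classical
  induction J using Finset.induction_on with
  | empty => simp
  | @insert a J ha ih =>
      rw [Finset.set_biUnion_insert]
      have hfinA : (dE a ∩ cutEdges GG A).Finite := (dE_finite a).inter_of_left _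
      have hdisj : Disjoint (dE a ∩ cutEdges GG A) (⋃ n ∈ J, (dE n ∩ cutEdges GG A)) := by
        simp only [Set.disjoint_left]
        rintro e ⟨heA, _⟩ hmem
        simp only [Set.mem_iUnion] at hmem
        obtain ⟨m, hm, hem, _⟩ := hmem
        have : a = m := (idx_dE heA).symm.trans (idx_dE hem)
        exact ha (this ▸ hm)
      constructor
      · exact hfinA.union ih.1
      · rw [Set.ncard_union_eq hdisj hfinA ih.1]
        exact (dE_even A a).add ih.2

lemma cut_parity (A : Set W4) (hfin : (DD ∩ cutEdges GG A).Finite) :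
    Even ((DD ∩ cutEdges GG A).ncard) := by
  classical
  set J : Finset ℕ := hfin.toFinset.image idx with hJ
  have hEq : DD ∩ cutEdges GG A = ⋃ n ∈ J, (dE n ∩ cutEdges GG A) := by
    ext e
    constructor
    · rintro ⟨heD, heC⟩
      obtain ⟨n, hn⟩ : ∃ n, e ∈ dE n := by simpa [DD] using heD
      have hidx : idx e = n := idx_dE hn
      have heJ : idx e ∈ J := by
        rw [hJ]
        exact Finset.mem_image_of_mem idx (hfin.mem_toFinset.2 ⟨heD, heC⟩)
      simp only [Set.mem_iUnion]
      exact ⟨n, hidx ▸ heJ, hn, heC⟩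
    · intro he
      simp only [Set.mem_iUnion] at he
      obtain ⟨n, _, hn, hC⟩ := he
      exact ⟨dE_subset_DD n hn, hC⟩
  rw [hEq]
  exact (biUnion_even A J).2

end Stmt18
namespace Stmt18

/-- vertices reachable from `y` within `X` -/
def reachSet (X : Set W4) (y : W4) : Set W4 := {z | Rin X y z}

lemma reachSet_subset (X : Set W4) (y : W4) : reachSet X y ⊆ X :=
  fun _ hz => hz.mem_right

lemma reachSet_upgrade {X : Set W4} {y z : W4} (hz : z ∈ reachSet X y) :
    Rin (reachSet X y) y z := by
  obtain ⟨w, hw⟩ := hz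
  exact ⟨w, fun x hx => ⟨w.takeUntil x hx, fun t ht => hw t (w.support_takeUntil_subset hx ht)⟩⟩

lemma reachSet_closed {X : Set W4} {y z b : W4} (hz : z ∈ reachSet X y) (hb : b ∈ X)
    (hadj : GG.Adj z b) : b ∈ reachSet X y :=
  Rin.trans hz (Rin.step hz.mem_right hb hadj)

/-- first entry into the complement of X -/
lemma first_entry {X : Set W4} : ∀ {u v : W4}, GG.Walk u v → u ∈ X → v ∉ X →
    ∃ b a : W4, Rin X u b ∧ GG.Adj b a ∧ a ∉ X := by
  intro u v w
  induction w with
  | nil => intro hu hv; exact absurd hu hv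
  | @cons x z c hadj rest ih =>
      intro hu hv
      by_cases hz : z ∈ X
      · obtain ⟨b, a, h1, h2, h3⟩ := ih hz hv
        exact ⟨b, a, (Rin.step hu hz hadj).trans h1, h2, h3⟩
      · exact ⟨x, z, Rin.refl hu, hadj, hz⟩

lemma incidence_finite (v : W4) : {e : Sym2 W4 | e ∈ GG.edgeSet ∧ v ∈ e}.Finite := by
  have : {e : Sym2 W4 | e ∈ GG.edgeSet ∧ v ∈ e} = GG.incidenceSet v := rfl
  rw [this]
  have : Finite (GG.neighborSet v) := (neighborSet_finite v).to_subtype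
  have : Finite (GG.incidenceSet v) := Finite.of_equiv _ (GG.incidenceSetEquivNeighborSet v).symm
  exact Set.toFinite _

lemma cut_finite_left {X : Set W4} (hX : X.Finite) : (cutEdges GG X).Finite := by
  have hsub : cutEdges GG X ⊆ ⋃ v ∈ X, {e : Sym2 W4 | e ∈ GG.edgeSet ∧ v ∈ e} := by
    rintro e ⟨x, y, hxy, hx, hy, rfl⟩
    simp only [Set.mem_iUnion]
    exact ⟨x, hx, hxy, by simp⟩
  exact Set.Finite.subset (hX.biUnion fun v _ => incidence_finite v) hsub

lemma cut_finite_right {X : Set W4} (hX : Xᶜ.Finite) : (cutEdges GG X).Finite := by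
  have hsub : cutEdges GG X ⊆ ⋃ v ∈ Xᶜ, {e : Sym2 W4 | e ∈ GG.edgeSet ∧ v ∈ e} := by
    rintro e ⟨x, y, hxy, hx, hy, rfl⟩
    simp only [Set.mem_iUnion]
    exact ⟨y, hy, hxy, by simp⟩
  exact Set.Finite.subset (hX.biUnion fun v _ => incidence_finite v) hsub

end Stmt18
namespace Stmt18

lemma bond_rep {B : Set (Sym2 W4)} (hB : IsBond GG B) :
    ∃ K : Set W4, B = cutEdges GG K ∧
      (∀ z ∈ K, ∀ z' ∈ K, Rin K z z') ∧
      (∀ w ∈ Kᶜ, ∀ w' ∈ Kᶜ, Rin Kᶜ w w') ∧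
      K.Nonempty ∧ Kᶜ.Nonempty := by
  obtain ⟨⟨A, rfl⟩, hne, hmin⟩ := hB
  obtain ⟨e₀, he₀⟩ := Set.nonempty_iff_ne_empty.2 hne
  obtain ⟨x, y, hxy, hxA, hyA, rfl⟩ := he₀
  -- the component of x inside A
  set A₁ : Set W4 := reachSet A x with hA₁
  have hxA₁ : x ∈ A₁ := Rin.refl hxA
  have hA₁A : A₁ ⊆ A := reachSet_subset A x
  have hyA₁ : y ∉ A₁ := fun h => hyA (hA₁A h)
  have hsub₁ : cutEdges GG A₁ ⊆ cutEdges GG A := by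
    rintro e ⟨a, b, hab, ha, hb, rfl⟩
    refine ⟨a, b, hab, hA₁A ha, fun hbA => hb (reachSet_closed ha hbA hab), rfl⟩
  have hEq₁ : cutEdges GG A₁ = cutEdges GG A := by
    refine hmin _ ⟨A₁, rfl⟩ ?_ hsub₁
    rw [← Set.nonempty_iff_ne_empty]
    exact ⟨s(x, y), x, y, hxy, hxA₁, hyA₁, rfl⟩
  -- the component of y inside A₁ᶜ
  set K : Set W4 := reachSet A₁ᶜ y with hK
  have hyK : y ∈ K := Rin.refl hyA₁
  have hKA₁c : K ⊆ A₁ᶜ := reachSet_subset _ y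
  have hxK : x ∉ K := fun h => (hKA₁c h) hxA₁
  have hsubK : cutEdges GG K ⊆ cutEdges GG A₁ := by
    rintro e ⟨a, b, hab, ha, hb, rfl⟩
    have hbA₁ : b ∈ A₁ := by
      by_contra hbc
      exact hb (reachSet_closed ha hbc hab)
    refine ⟨b, a, hab.symm, hbA₁, fun haA₁ => (hKA₁c ha) haA₁, Sym2.eq_swap⟩
  have hEqK : cutEdges GG K = cutEdges GG A := by
    refine hmin _ ⟨K, rfl⟩ ?_ (hsubK.trans hEq₁.subset)
    rw [← Set.nonempty_iff_ne_empty]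
    exact ⟨s(y, x), y, x, hxy.symm, hyK, hxK, rfl⟩
  refine ⟨K, hEqK.symm, ?_, ?_, ⟨y, hyK⟩, ⟨x, hxK⟩⟩
  · intro z hz z' hz'
    exact (reachSet_upgrade hz).symm.trans (reachSet_upgrade hz')
  · -- complement of K is connected, via the hub A₁
    have hA₁Kc : A₁ ⊆ Kᶜ := fun a ha hK => (hKA₁c hK) ha
    have hub : ∀ w ∈ Kᶜ, Rin Kᶜ w x := by
      intro w hw
      by_cases hwA₁ : w ∈ A₁
      · exact ((reachSet_upgrade hwA₁).mono hA₁Kc).symm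
      · -- w ∈ A₁ᶜ ∖ K
        obtain ⟨wk⟩ := GG_preconnected w x
        obtain ⟨b, a, hwb, hba, haA₁c⟩ := first_entry (X := A₁ᶜ) wk hwA₁ (by simpa using hxA₁)
        have haA₁ : a ∈ A₁ := by simpa using haA₁c
        -- the walk from w to b stays outside K
        have hwbK : Rin Kᶜ w b := by
          obtain ⟨w2, hw2⟩ := hwb
          refine ⟨w2, fun t ht => ?_⟩
          intro htK
          -- then w would be in K
          have h1 : Rin A₁ᶜ w t := ⟨w2.takeUntil t ht, fun u hu => hw2 u (w2.support_takeUntil_subset ht hu)⟩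
          exact hw ((reachSet_upgrade htK).mono (reachSet_subset _ y) |>.trans h1.symm)
        have hbKc : b ∈ Kᶜ := hwbK.mem_right
        have haKc : a ∈ Kᶜ := hA₁Kc haA₁
        have h2 : Rin Kᶜ b a := Rin.step hbKc haKc hba
        have h3 : Rin Kᶜ a x := ((reachSet_upgrade haA₁).mono hA₁Kc).symm
        exact (hwbK.trans h2).trans h3
    intro w hw w' hw'
    exact (hub w hw).trans (hub w' hw').symm

end Stmt18
namespace Stmt18

lemma vc_level (n : ℕ) : (vc n).1 = n := rfl

lemma bond_inter_finite {K : Set W4}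
    (hconn : ∀ z ∈ K, ∀ z' ∈ K, Rin K z z')
    (hcconn : ∀ w ∈ Kᶜ, ∀ w' ∈ Kᶜ, Rin Kᶜ w w') :
    (DD ∩ cutEdges GG K).Finite := by
  by_cases hKfin : K.Finite
  · exact (cut_finite_left hKfin).inter_of_right DD
  by_cases hKcfin : Kᶜ.Finite
  · exact (cut_finite_right hKcfin).inter_of_right DD
  -- both sides infinite
  have hnot : ¬ ((∀ N, ∃ n, N ≤ n ∧ vc n ∈ K) ∧ (∀ N, ∃ n, N ≤ n ∧ vc n ∉ K)) := by
    rintro ⟨hU, hV⟩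
    obtain ⟨n0, -, hn0⟩ := hU 0
    obtain ⟨m0, -, hm0⟩ := hV 0
    set k₀ := max n0 m0 with hk₀
    have dich : ∀ k, k₀ ≤ k →
        ((vc (k+1) ∈ K → (vu k ∉ K ∧ vu (k+1) ∉ K)) ∧
         (vc (k+1) ∉ K → (vu k ∈ K ∧ vu (k+1) ∈ K))) := by
      intro k hk
      obtain ⟨N, hN1, hN2⟩ := hU (k+1)
      obtain ⟨M, hM1, hM2⟩ := hV (k+1)
      have crossK := crossing (hconn _ hn0 _ hN2) (k := k)
        (by rw [vc_level]; omega) (by rw [vc_level]; omega)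
      have crossKc := crossing (hcconn _ hm0 _ hM2) (k := k)
        (by rw [vc_level]; omega) (by rw [vc_level]; omega)
      constructor
      · intro hcK
        rcases crossKc with h | ⟨h1, h2⟩
        · exact absurd hcK h
        · exact ⟨h1, h2⟩
      · intro hcK
        rcases crossK with h | ⟨h1, h2⟩
        · exact absurd h hcK
        · exact ⟨h1, h2⟩
    -- find a switch above k₀
    obtain ⟨n, hn1, hnK, hnK'⟩ : ∃ n, k₀ + 1 ≤ n ∧ vc n ∈ K ∧ vc (n+1) ∉ K := by
      by_contra hsw
      push_neg at hsw
      obtain ⟨n1, hn11, hn12⟩ := hU (k₀ + 1)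
      obtain ⟨n2, hn21, hn22⟩ := hV (n1 + 1)
      have hall : ∀ d, vc (n1 + d) ∈ K := by
        intro d
        induction d with
        | zero => simpa using hn12
        | succ d ih => exact hsw (n1 + d) (by omega) ih
      have := hall (n2 - n1)
      rw [show n1 + (n2 - n1) = n2 by omega] at this
      exact hn22 this
    obtain ⟨m, rfl⟩ : ∃ m, n = m + 1 := ⟨n - 1, by omega⟩
    have h1 := (dich m (by omega)).1 hnK
    have h2 := (dich (m+1) (by omega)).2 hnK'
    exact h1.2 h2.1
  -- so the c's are eventually on one side
  have hbdd : (∃ N, ∀ n, N ≤ n → vc n ∉ K) ∨ (∃ N, ∀ n, N ≤ n → vc n ∈ K) := by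
    by_contra hcon
    push_neg at hcon
    obtain ⟨h1, h2⟩ := hcon
    apply hnot
    constructor
    · intro N
      obtain ⟨n, hn1, hn2⟩ := h1 N
      exact ⟨n, hn1, hn2⟩
    · intro N
      obtain ⟨n, hn1, hn2⟩ := h2 N
      exact ⟨n, hn1, hn2⟩
  have key : ∃ N : ℕ, ∀ n, N ≤ n → ((vc n ∈ K ↔ vc (n+1) ∈ K) ∧ (vp n ∈ K ↔ vc n ∈ K) ∧ (vq n ∈ K ↔ vc n ∈ K)) := by
    rcases hbdd with ⟨N, hN⟩ | ⟨N, hN⟩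
    · refine ⟨N, fun n hn => ?_⟩
      have hc1 : vc n ∉ K := hN n hn
      have hc2 : vc (n+1) ∉ K := hN (n+1) (by omega)
      have hp : vp n ∉ K := by
        intro hpK
        apply hKfin
        apply Set.Finite.subset (Set.finite_singleton (vp n))
        intro z hz
        rcases (hconn _ hpK _ hz).cases_head with h | ⟨t, htK, hadj⟩
        · simp [h]
        · rcases adj_vp_cases hadj with rfl | rfl
          exacts [absurd htK hc1, absurd htK hc2]
      have hq : vq n ∉ K := by
        intro hqK
        apply hKfin
        apply Set.Finite.subset (Set.finite_singleton (vq n))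
        intro z hz
        rcases (hconn _ hqK _ hz).cases_head with h | ⟨t, htK, hadj⟩
        · simp [h]
        · rcases adj_vq_cases hadj with rfl | rfl
          exacts [absurd htK hc1, absurd htK hc2]
      simp [hc1, hc2, hp, hq]
    · refine ⟨N, fun n hn => ?_⟩
      have hc1 : vc n ∈ K := hN n hn
      have hc2 : vc (n+1) ∈ K := hN (n+1) (by omega)
      have hp : vp n ∈ K := by
        by_contra hpK
        apply hKcfin
        apply Set.Finite.subset (Set.finite_singleton (vp n))
        intro z hz
        rcases (hcconn _ hpK _ hz).cases_head with h | ⟨t, htK, hadj⟩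
        · simp [h]
        · rcases adj_vp_cases hadj with rfl | rfl
          exacts [absurd hc1 htK, absurd hc2 htK]
      have hq : vq n ∈ K := by
        by_contra hqK
        apply hKcfin
        apply Set.Finite.subset (Set.finite_singleton (vq n))
        intro z hz
        rcases (hcconn _ hqK _ hz).cases_head with h | ⟨t, htK, hadj⟩
        · simp [h]
        · rcases adj_vq_cases hadj with rfl | rfl
          exacts [absurd hc1 htK, absurd hc2 htK]
      simp [hc1, hc2, hp, hq]
  obtain ⟨N, hN⟩ := key
  have hsub : DD ∩ cutEdges GG K ⊆ ⋃ n ∈ Set.Iic N, dE n := by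
    rintro e ⟨heD, heC⟩
    obtain ⟨n, hn⟩ : ∃ n, e ∈ dE n := by simpa [DD] using heD
    simp only [Set.mem_iUnion, Set.mem_Iic]
    refine ⟨n, ?_, hn⟩
    by_contra hcon
    push_neg at hcon
    have hmono := hN n (by omega)
    rcases hn with h|h|h|h <;> subst h
    · exact not_mem_cut_of_both (adj_cp n) (by tauto) heC
    · exact not_mem_cut_of_both (adj_pc n) (by tauto) heC
    · exact not_mem_cut_of_both (adj_cq n) (by tauto) heC
    · exact not_mem_cut_of_both (adj_qc n) (by tauto) heC
  exact Set.Finite.subset ((Set.finite_Iic N).biUnion fun n _ => dE_finite n) hsub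

end Stmt18


/-- There are a locally finite 2-connected graph `G` and an edge set `D` meeting every
bond finitely and evenly, but meeting some cut infinitely. -/
theorem stmt_18 : ∃ (W : Type) (G : SimpleGraph W) (D : Set (Sym2 W)),
    (∀ x : W, (G.neighborSet x).Finite) ∧ KConnected G 2 ∧ D ⊆ G.edgeSet ∧
    (∀ B, IsBond G B → EvenInter D B) ∧
    ∃ C, IsCut G C ∧ (D ∩ C).Infinite := by
  classical
  refine ⟨Stmt18.W4, Stmt18.GG, Stmt18.DD, Stmt18.neighborSet_finite, ⟨?_, Stmt18.GG_kconnected⟩,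
    Stmt18.DD_subset_edgeSet, ?_, ?_⟩
  · have h1 : (Set.univ : Set Stmt18.W4).Infinite := Set.infinite_univ
    rw [h1.encard_eq]
    exact lt_top_iff_ne_top.2 (by simp)
  · intro B hB
    obtain ⟨K, rfl, hconn, hcconn, -, -⟩ := Stmt18.bond_rep hB
    have hfin := Stmt18.bond_inter_finite hconn hcconn
    exact ⟨hfin, Stmt18.cut_parity K hfin⟩
  · refine ⟨cutEdges Stmt18.GG {v : Stmt18.W4 | v.2 = 1}, ⟨_, rfl⟩, ?_⟩
    apply Set.infinite_of_injective_forall_mem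
      (f := fun n : ℕ => s(Stmt18.vc n, Stmt18.vp n))
    · intro a b h
      rw [Sym2.eq_iff] at h
      rcases h with ⟨h1, -⟩ | ⟨h1, -⟩ <;>
        simpa [Stmt18.vc, Stmt18.vp, Prod.ext_iff] using h1
    · intro n
      constructor
      · exact Stmt18.dE_subset_DD n (by simp [Stmt18.dE])
      · rw [Stmt18.mem_cutEdges_iff (Stmt18.adj_cp n)]
        refine Or.inr ⟨rfl, ?_⟩
        simp [Stmt18.vc]
end

section
/- There exist a locally finite 2-connected simple graph G and an edge set D ⊆ E(G) such that D has finite even intersection with every finite circuit of G and with the edge set of every double ray of G, but D ∩ D' is infinite for some element D' of the algebraic cycle space C_alg(G). -/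
open Set

variable {V : Type*}

namespace Stmt19

abbrev W : Type := ℕ × Fin 3

def av (n : ℕ) : W := (n, 0)
def bv (n : ℕ) : W := (n, 1)
def cv (n : ℕ) : W := (n, 2)

def grel : W → W → Prop := fun x y =>
  (x.1 = y.1 ∧ x.2 ≠ y.2) ∨ (x.1 + 1 = y.1 ∧ x.2 = y.2 ∧ x.2 ≠ 2)

def GG : SimpleGraph W := SimpleGraph.fromRel grel

lemma adj_iff {x y : W} : GG.Adj x y ↔ x ≠ y ∧ (grel x y ∨ grel y x) :=
  SimpleGraph.fromRel_adj grel x y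

lemma fin3 : ∀ i : Fin 3, i = 0 ∨ i = 1 ∨ i = 2 := by decide

lemma vcases (x : W) : x = av x.1 ∨ x = bv x.1 ∨ x = cv x.1 := by
  obtain ⟨n, i⟩ := x
  rcases fin3 i with h | h | h <;> subst h <;> simp [av, bv, cv]

lemma adj_ab (n : ℕ) : GG.Adj (av n) (bv n) :=
  adj_iff.mpr ⟨by simp [av, bv, Prod.ext_iff], Or.inl (Or.inl ⟨rfl, by show (0:Fin 3) ≠ 1; decide⟩)⟩

lemma adj_ac (n : ℕ) : GG.Adj (av n) (cv n) :=
  adj_iff.mpr ⟨by simp [av, cv, Prod.ext_iff], Or.inl (Or.inl ⟨rfl, by show (0:Fin 3) ≠ 2; decide⟩)⟩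

lemma adj_bc (n : ℕ) : GG.Adj (bv n) (cv n) :=
  adj_iff.mpr ⟨by simp [bv, cv, Prod.ext_iff], Or.inl (Or.inl ⟨rfl, by show (1:Fin 3) ≠ 2; decide⟩)⟩

lemma adj_aa (n : ℕ) : GG.Adj (av n) (av (n + 1)) :=
  adj_iff.mpr ⟨by simp [av, Prod.ext_iff], Or.inl (Or.inr ⟨rfl, rfl, by show (0:Fin 3) ≠ 2; decide⟩)⟩

lemma adj_bb (n : ℕ) : GG.Adj (bv n) (bv (n + 1)) :=
  adj_iff.mpr ⟨by simp [bv, Prod.ext_iff], Or.inl (Or.inr ⟨rfl, rfl, by show (1:Fin 3) ≠ 2; decide⟩)⟩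

lemma adj_same_col {x y : W} (h1 : x.1 = y.1) (h2 : x ≠ y) : GG.Adj x y := by
  refine adj_iff.mpr ⟨h2, Or.inl (Or.inl ⟨h1, ?_⟩)⟩
  intro h3
  exact h2 (Prod.ext h1 h3)

lemma adj_col {x y : W} (h : GG.Adj x y) : x.1 = y.1 ∨ x.1 + 1 = y.1 ∨ y.1 + 1 = x.1 := by
  rcases adj_iff.mp h with ⟨-, h | h⟩ <;> rcases h with ⟨h1, -⟩ | ⟨h1, -⟩ <;> omega

lemma adj_cv {x : W} {n : ℕ} (h : GG.Adj x (cv n)) : x = av n ∨ x = bv n := by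
  have hcol : x.1 = n := by
    rcases adj_iff.mp h with ⟨-, h | h⟩
    · rcases h with ⟨h1, -⟩ | ⟨-, h2, h3⟩
      · exact h1
      · exact absurd h2 h3
    · rcases h with ⟨h1, -⟩ | ⟨-, h2, h3⟩
      · exact h1.symm
      · exact absurd rfl h3
  have hrow : x.2 ≠ 2 := by
    intro h2
    have : x = cv n := by
      obtain ⟨p, q⟩ := x
      simp only [cv] at *
      simp [hcol, h2]
    rw [this] at h
    exact h.ne rfl
  rcases vcases x with hx | hx | hx
  · left; rw [hx, hcol]
  · right; rw [hx, hcol]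
  · exact absurd (by rw [hx]; rfl) hrow

lemma nbr_finite (x : W) : (GG.neighborSet x).Finite := by
  apply Set.Finite.subset (((Set.finite_Iic (x.1 + 1)).prod (Set.finite_univ (α := Fin 3))))
  intro y hy
  have := adj_col (hy : GG.Adj x y)
  constructor
  · simp only [Set.mem_Iic]; omega
  · trivial


def ac (n : ℕ) : Sym2 W := s(av n, cv n)
def bc (n : ℕ) : Sym2 W := s(bv n, cv n)
def ab (n : ℕ) : Sym2 W := s(av n, bv n)

def DD : Set (Sym2 W) := {e | ∃ n, e = ac n ∨ e = bc n}
def DD' : Set (Sym2 W) := {e | ∃ n, e = ac n ∨ e = bc n ∨ e = ab n}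

lemma av_eq_av {n m : ℕ} : av n = av m ↔ n = m := by simp [av]
lemma av_ne_bv {n m : ℕ} : av n ≠ bv m := by simp [av, bv, Prod.ext_iff, Fin.ext_iff]
lemma av_ne_cv {n m : ℕ} : av n ≠ cv m := by simp [av, cv, Prod.ext_iff, Fin.ext_iff]
lemma bv_ne_cv {n m : ℕ} : bv n ≠ cv m := by simp [bv, cv, Prod.ext_iff, Fin.ext_iff]
lemma bv_eq_bv {n m : ℕ} : bv n = bv m ↔ n = m := by simp [bv]
lemma cv_eq_cv {n m : ℕ} : cv n = cv m ↔ n = m := by simp [cv]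

lemma ac_inj : Function.Injective ac := by
  intro n m h
  rw [ac, ac, Sym2.eq_iff] at h
  rcases h with ⟨h1, -⟩ | ⟨h1, -⟩
  · exact av_eq_av.mp h1
  · exact absurd h1 av_ne_cv

lemma bc_inj : Function.Injective bc := by
  intro n m h
  rw [bc, bc, Sym2.eq_iff] at h
  rcases h with ⟨h1, -⟩ | ⟨h1, -⟩
  · exact bv_eq_bv.mp h1
  · exact absurd h1 bv_ne_cv

lemma ac_ne_bc {n m : ℕ} : ac n ≠ bc m := by
  intro h
  rw [ac, bc, Sym2.eq_iff] at h
  revert h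
  rintro (⟨h1, -⟩ | ⟨h1, -⟩)
  · exact av_ne_bv h1
  · exact av_ne_cv h1

lemma ac_ne_ab {n m : ℕ} : ac n ≠ ab m := by
  intro h
  rw [ac, ab, Sym2.eq_iff] at h
  revert h
  rintro (⟨-, h2⟩ | ⟨h1, -⟩)
  · exact bv_ne_cv h2.symm
  · exact av_ne_bv h1

lemma bc_ne_ab {n m : ℕ} : bc n ≠ ab m := by
  intro h
  rw [bc, ab, Sym2.eq_iff] at h
  revert h
  rintro (⟨-, h2⟩ | ⟨-, h2⟩)
  · exact bv_ne_cv h2.symm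
  · exact av_ne_cv h2.symm

lemma even_helper {F : Set (Sym2 W)} {T : Set ℕ} (hT : T.Finite)
    (h : DD ∩ F = ac '' T ∪ bc '' T) : EvenInter DD F := by
  have hdisj : Disjoint (ac '' T) (bc '' T) := by
    rw [Set.disjoint_left]
    rintro e ⟨n, -, rfl⟩ ⟨m, -, he⟩
    exact ac_ne_bc he.symm
  constructor
  · rw [h]; exact (hT.image _).union (hT.image _)
  · rw [h, Set.ncard_union_eq hdisj (hT.image _) (hT.image _),
      Set.ncard_image_of_injective _ ac_inj, Set.ncard_image_of_injective _ bc_inj]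
    exact ⟨T.ncard, rfl⟩


open SimpleGraph Walk in
lemma cycle_start (n : ℕ) (w : GG.Walk (cv n) (cv n)) (hw : w.IsCycle) :
    ac n ∈ w.edges ∧ bc n ∈ w.edges := by
  cases w with
  | nil => exact absurd rfl hw.ne_nil
  | @cons _ d _ h p =>
    have hd : d = av n ∨ d = bv n := adj_cv h.symm
    have hnodup : (Walk.cons h p).edges.Nodup := hw.edges_nodup
    cases hp : p.reverse with
    | nil =>
      exfalso
      have : p = Walk.nil.reverse := by
        rw [← hp]; rw [Walk.reverse_reverse]
      rw [Walk.reverse_nil] at this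
      subst this
      exact h.ne rfl
    | @cons _ y _ h2 q =>
      have hy : y = av n ∨ y = bv n := adj_cv h2.symm
      have e1 : s(cv n, d) ∈ (Walk.cons h p).edges := by
        rw [Walk.edges_cons]; exact List.mem_cons_self
      have e2 : s(cv n, y) ∈ p.edges := by
        have : s(cv n, y) ∈ p.reverse.edges := by
          rw [hp, Walk.edges_cons]; exact List.mem_cons_self
        rwa [Walk.edges_reverse, List.mem_reverse] at this
      have e2' : s(cv n, y) ∈ (Walk.cons h p).edges := by
        rw [Walk.edges_cons]; exact List.mem_cons_of_mem _ e2
      have hdy : d ≠ y := by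
        rintro rfl
        rw [Walk.edges_cons, List.nodup_cons] at hnodup
        exact hnodup.1 e2
      rcases hd with rfl | rfl
      · rcases hy with hy | rfl
        · exact absurd hy.symm hdy
        · constructor
          · rw [ac, Sym2.eq_swap]; exact e1
          · rw [bc, Sym2.eq_swap]; exact e2'
      · rcases hy with rfl | hy
        · constructor
          · rw [ac, Sym2.eq_swap]; exact e2'
          · rw [bc, Sym2.eq_swap]; exact e1
        · exact absurd hy.symm hdy

lemma cycle_both {v : W} (w : GG.Walk v v) (hw : w.IsCycle) {n : ℕ}
    (hc : cv n ∈ w.support) : ac n ∈ w.edges ∧ bc n ∈ w.edges := by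
  classical
  have hperm : (w.rotate _ hc).edges ~r w.edges := w.rotate_edges _ hc
  have := cycle_start n (w.rotate _ hc) (hw.rotate hc)
  exact ⟨hperm.mem_iff.mp this.1, hperm.mem_iff.mp this.2⟩

lemma circuit_even : ∀ C, IsCircuit GG C → EvenInter DD C := by
  rintro C ⟨v, w, hw, rfl⟩
  have hTfin : {n : ℕ | cv n ∈ w.support}.Finite := by
    have : {n : ℕ | cv n ∈ w.support} ⊆ cv ⁻¹' {x | x ∈ w.support} := fun n hn => hn
    exact Set.Finite.subset ((w.support.finite_toSet).preimage
      (fun a _ b _ h => cv_eq_cv.mp h)) this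
  apply even_helper hTfin
  ext e
  constructor
  · rintro ⟨⟨n, rfl | rfl⟩, hC⟩
    · exact Or.inl ⟨n, SimpleGraph.Walk.snd_mem_support_of_mem_edges w hC, rfl⟩
    · exact Or.inr ⟨n, SimpleGraph.Walk.snd_mem_support_of_mem_edges w hC, rfl⟩
  · rintro (⟨n, hn, rfl⟩ | ⟨n, hn, rfl⟩)
    · exact ⟨⟨n, Or.inl rfl⟩, (cycle_both w hw hn).1⟩
    · exact ⟨⟨n, Or.inr rfl⟩, (cycle_both w hw hn).2⟩


lemma ivt (f : ℕ → ℕ) (m : ℕ) :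
    ∀ L, f 0 ≤ m → m ≤ f L → (∀ i, f (i + 1) ≤ f i + 1) → ∃ i ≤ L, f i = m := by
  intro L
  induction L with
  | zero => intro h0 hL _; exact ⟨0, le_refl _, le_antisymm h0 hL⟩
  | succ L ih =>
    intro h0 hL hstep
    by_cases hm : m ≤ f L
    · obtain ⟨i, h1, h2⟩ := ih h0 hm hstep
      exact ⟨i, h1.trans (Nat.le_succ L), h2⟩
    · have := hstep L
      exact ⟨L + 1, le_refl _, by omega⟩

lemma col_av (n : ℕ) : (av n).1 = n := rfl
lemma col_bv (n : ℕ) : (bv n).1 = n := rfl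
lemma col_cv (n : ℕ) : (cv n).1 = n := rfl

lemma no_two {R : ℤ → W} (inj : Function.Injective R)
    (hadj : ∀ t : ℤ, GG.Adj (R t) (R (t + 1)))
    {n m : ℕ} {j k : ℤ} (hj : R j = cv n) (hk : R k = cv m) (hnm : n < m) : False := by
  have h1 : R (k - 1) = av m ∨ R (k - 1) = bv m := by
    apply adj_cv
    have := hadj (k - 1)
    rw [show k - 1 + 1 = k by ring, hk] at this
    exact this
  have h2 : R (k + 1) = av m ∨ R (k + 1) = bv m := by
    apply adj_cv
    have := hadj k
    rw [hk] at this
    exact this.symm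
  have hne : R (k - 1) ≠ R (k + 1) := by
    intro hh
    have := inj hh
    omega
  have colm : ∀ t : ℤ, (R t).1 = m → t = k - 1 ∨ t = k ∨ t = k + 1 := by
    intro t ht
    rcases vcases (R t) with hx | hx | hx
    · rw [ht] at hx
      rcases h1 with h1 | h1
      · exact Or.inl (inj (hx.trans h1.symm))
      · rcases h2 with h2 | h2
        · exact Or.inr (Or.inr (inj (hx.trans h2.symm)))
        · exact absurd (h1.trans h2.symm) hne
    · rw [ht] at hx
      rcases h1 with h1 | h1
      · rcases h2 with h2 | h2
        · exact absurd (h1.trans h2.symm) hne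
        · exact Or.inr (Or.inr (inj (hx.trans h2.symm)))
      · exact Or.inl (inj (hx.trans h1.symm))
    · rw [ht] at hx
      exact Or.inr (Or.inl (inj (hx.trans hk.symm)))
  have hfin : {t : ℤ | (R t).1 ≤ m}.Finite := by
    have hv : {x : W | x.1 ≤ m}.Finite := by
      apply Set.Finite.subset ((Set.finite_Iic m).prod (Set.finite_univ (α := Fin 3)))
      rintro ⟨p, q⟩ hpq
      exact ⟨hpq, trivial⟩
    exact hv.preimage inj.injOn
  have hjcol : (R j).1 = n := by rw [hj]; rfl
  have hkcol : (R k).1 = m := by rw [hk]; rfl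
  have hk1col : (R (k - 1)).1 = m := by rcases h1 with h1 | h1 <;> rw [h1] <;> rfl
  have hk2col : (R (k + 1)).1 = m := by rcases h2 with h2 | h2 <;> rw [h2] <;> rfl
  have hj1 : j ≠ k - 1 := by intro e; rw [e, hk1col] at hjcol; omega
  have hj2 : j ≠ k := by intro e; rw [e, hkcol] at hjcol; omega
  have hj3 : j ≠ k + 1 := by intro e; rw [e, hk2col] at hjcol; omega
  have hstepcol : ∀ t : ℤ, (R (t + 1)).1 ≤ (R t).1 + 1 ∧ (R t).1 ≤ (R (t + 1)).1 + 1 := by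
    intro t
    have := adj_col (hadj t)
    omega
  rcases lt_or_gt_of_ne hj2 with hlt | hgt
  · -- j < k, go left
    obtain ⟨t0, ht0⟩ := ((Set.Iic_infinite j).diff hfin).nonempty
    obtain ⟨ht0j, ht0m⟩ := ht0
    simp only [Set.mem_Iic] at ht0j
    simp only [Set.mem_setOf_eq, not_le] at ht0m
    set L : ℕ := (j - t0).toNat with hL
    have hcast : (L : ℤ) = j - t0 := Int.toNat_of_nonneg (by omega)
    obtain ⟨i, hiL, hfi⟩ := ivt (fun i => (R (j - i)).1) m L
      (by simp [hjcol]; omega)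
      (by
        have : j - (L : ℤ) = t0 := by omega
        simp only [this]
        omega)
      (by
        intro i
        have h := (hstepcol (j - i - 1)).2
        have e : j - i - 1 + 1 = j - i := by ring
        rw [e] at h
        have e2 : j - ((i : ℤ) + 1) = j - i - 1 := by ring
        simp only [Nat.cast_add, Nat.cast_one, e2]
        exact h)
    have := colm (j - i) hfi
    omega
  · -- j > k, go right
    obtain ⟨t0, ht0⟩ := ((Set.Ici_infinite j).diff hfin).nonempty
    obtain ⟨ht0j, ht0m⟩ := ht0
    simp only [Set.mem_Ici] at ht0j
    simp only [Set.mem_setOf_eq, not_le] at ht0m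
    set L : ℕ := (t0 - j).toNat with hL
    have hcast : (L : ℤ) = t0 - j := Int.toNat_of_nonneg (by omega)
    obtain ⟨i, hiL, hfi⟩ := ivt (fun i => (R (j + i)).1) m L
      (by simp [hjcol]; omega)
      (by
        have : j + (L : ℤ) = t0 := by omega
        simp only [this]
        omega)
      (by
        intro i
        have h := (hstepcol (j + i)).1
        have e2 : j + ((i : ℤ) + 1) = j + i + 1 := by ring
        simp only [Nat.cast_add, Nat.cast_one, e2]
        exact h)
    have := colm (j + i) hfi
    omega

lemma mem_dray {R : ℤ → W} {t : ℤ} {x y : W} (h1 : R t = x) (h2 : R (t + 1) = y) :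
    s(x, y) ∈ doubleRayEdges R := ⟨t, by rw [h1, h2]⟩

lemma mem_dray' {R : ℤ → W} {t : ℤ} {x y : W} (h1 : R t = x) (h2 : R (t + 1) = y) :
    s(y, x) ∈ doubleRayEdges R := ⟨t, by rw [h1, h2, Sym2.eq_swap]⟩

lemma dray_even : ∀ F, IsDoubleRayEdgeSet GG F → EvenInter DD F := by
  rintro F ⟨R, ⟨inj, hadj⟩, rfl⟩
  have hTsub : {n : ℕ | ∃ k, R k = cv n}.Subsingleton := by
    rintro n ⟨j, hj⟩ m ⟨k, hk⟩
    by_contra hne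
    rcases lt_or_gt_of_ne hne with h | h
    · exact no_two inj hadj hj hk h
    · exact no_two inj hadj hk hj h
  apply even_helper hTsub.finite
  ext e
  constructor
  · rintro ⟨⟨n, rfl | rfl⟩, hF⟩
    · obtain ⟨t, ht⟩ := hF
      rw [ac, Sym2.eq_iff] at ht
      rcases ht with ⟨-, h2⟩ | ⟨-, h2⟩
      · exact Or.inl ⟨n, ⟨t + 1, h2.symm⟩, rfl⟩
      · exact Or.inl ⟨n, ⟨t, h2.symm⟩, rfl⟩
    · obtain ⟨t, ht⟩ := hF
      rw [bc, Sym2.eq_iff] at ht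
      rcases ht with ⟨-, h2⟩ | ⟨-, h2⟩
      · exact Or.inr ⟨n, ⟨t + 1, h2.symm⟩, rfl⟩
      · exact Or.inr ⟨n, ⟨t, h2.symm⟩, rfl⟩
  · rintro (⟨n, ⟨k, hk⟩, rfl⟩ | ⟨n, ⟨k, hk⟩, rfl⟩)
    · refine ⟨⟨n, Or.inl rfl⟩, ?_⟩
      have hprev : R (k - 1) = av n ∨ R (k - 1) = bv n := by
        apply adj_cv
        have := hadj (k - 1)
        rw [show k - 1 + 1 = k by ring, hk] at this
        exact this
      have hnext : R (k + 1) = av n ∨ R (k + 1) = bv n := by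
        apply adj_cv
        have := hadj k
        rw [hk] at this
        exact this.symm
      rcases hprev with hp | hp
      · exact mem_dray hp (by rw [show k - 1 + 1 = k by ring]; exact hk)
      · rcases hnext with hq | hq
        · exact mem_dray' hk hq
        · exfalso
          have : R (k - 1) = R (k + 1) := hp.trans hq.symm
          have := inj this
          omega
    · refine ⟨⟨n, Or.inr rfl⟩, ?_⟩
      have hprev : R (k - 1) = av n ∨ R (k - 1) = bv n := by
        apply adj_cv
        have := hadj (k - 1)
        rw [show k - 1 + 1 = k by ring, hk] at this
        exact this
      have hnext : R (k + 1) = av n ∨ R (k + 1) = bv n := by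
        apply adj_cv
        have := hadj k
        rw [hk] at this
        exact this.symm
      rcases hprev with hp | hp
      · rcases hnext with hq | hq
        · exfalso
          have : R (k - 1) = R (k + 1) := hp.trans hq.symm
          have := inj this
          omega
        · exact mem_dray' hk hq
      · exact mem_dray hp (by rw [show k - 1 + 1 = k by ring]; exact hk)


lemma connected_del (S : Set W) (hS : S.Subsingleton) : (GG.induce Sᶜ).Connected := by
  classical
  have hrS : ∀ n : ℕ, (if av n ∈ S then bv n else av n) ∈ Sᶜ := by
    intro n
    by_cases h : av n ∈ S
    · simp only [if_pos h]
      intro hb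
      exact av_ne_bv (hS h hb)
    · simp only [if_neg h]; exact h
  let r : ℕ → ↥(Sᶜ) := fun n => ⟨if av n ∈ S then bv n else av n, hrS n⟩
  have hAdj : ∀ (x y : W) (hx : x ∈ Sᶜ) (hy : y ∈ Sᶜ), GG.Adj x y →
      (GG.induce Sᶜ).Reachable ⟨x, hx⟩ ⟨y, hy⟩ := by
    intro x y hx hy h
    exact SimpleGraph.Adj.reachable (by simpa using h)
  have hcolr : ∀ n, (r n).1.1 = n := by
    intro n
    by_cases h : av n ∈ S <;> simp only [r, if_pos, if_neg, h, if_true, if_false] <;> rfl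
  have hsame : ∀ (x : W) (hx : x ∈ Sᶜ) (n : ℕ), x.1 = n →
      (GG.induce Sᶜ).Reachable ⟨x, hx⟩ (r n) := by
    intro x hx n hcol
    by_cases he : x = (r n).1
    · have : (⟨x, hx⟩ : ↥(Sᶜ)) = r n := Subtype.ext he
      rw [this]
    · exact hAdj _ _ hx (r n).2 (adj_same_col (hcol.trans (hcolr n).symm) he)
  have hrail : ∀ n : ℕ, (GG.induce Sᶜ).Reachable (r n) (r (n + 1)) := by
    intro n
    by_cases h1 : av n ∈ S <;> by_cases h2 : av (n + 1) ∈ S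
    · exact absurd (hS h1 h2) (by intro hcontra; rw [av_eq_av] at hcontra; omega)
    · have hbn : bv n ∈ Sᶜ := by have := hrS n; rwa [if_pos h1] at this
      have hb1 : bv (n + 1) ∈ Sᶜ := fun hb => av_ne_bv (hS h1 hb)
      exact (hsame (bv n) hbn n rfl).symm.trans ((hAdj _ _ hbn hb1 (adj_bb n)).trans
        ((hAdj _ _ hb1 h2 ((adj_ab (n + 1)).symm)).trans (hsame (av (n + 1)) h2 (n + 1) rfl)))
    · have hbn : bv n ∈ Sᶜ := fun hb => av_ne_bv (hS h2 hb)
      have hb1 : bv (n + 1) ∈ Sᶜ := by have := hrS (n + 1); rwa [if_pos h2] at this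
      exact (hsame (av n) h1 n rfl).symm.trans ((hAdj _ _ h1 hbn (adj_ab n)).trans
        ((hAdj _ _ hbn hb1 (adj_bb n)).trans (hsame (bv (n + 1)) hb1 (n + 1) rfl)))
    · exact (hsame (av n) h1 n rfl).symm.trans ((hAdj _ _ h1 h2 (adj_aa n)).trans
        (hsame (av (n + 1)) h2 (n + 1) rfl))
  have hr0 : ∀ n, (GG.induce Sᶜ).Reachable (r n) (r 0) := by
    intro n
    induction n with
    | zero => exact SimpleGraph.Reachable.refl _
    | succ n ih => exact (hrail n).symm.trans ih
  rw [SimpleGraph.connected_iff]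
  refine ⟨?_, ⟨r 0⟩⟩
  rintro ⟨x, hx⟩ ⟨y, hy⟩
  exact ((hsame x hx x.1 rfl).trans (hr0 x.1)).trans
    (((hsame y hy y.1 rfl).trans (hr0 y.1)).symm)

lemma mem_ac_iff {x : W} {n : ℕ} : x ∈ ac n ↔ x = av n ∨ x = cv n := Sym2.mem_iff
lemma mem_bc_iff {x : W} {n : ℕ} : x ∈ bc n ↔ x = bv n ∨ x = cv n := Sym2.mem_iff
lemma mem_ab_iff {x : W} {n : ℕ} : x ∈ ab n ↔ x = av n ∨ x = bv n := Sym2.mem_iff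

lemma calg : DD' ∈ CAlg GG := by
  constructor
  · rintro e ⟨n, rfl | rfl | rfl⟩
    · exact (SimpleGraph.mem_edgeSet GG).mpr (adj_ac n)
    · exact (SimpleGraph.mem_edgeSet GG).mpr (adj_bc n)
    · exact (SimpleGraph.mem_edgeSet GG).mpr (adj_ab n)
  · intro v
    rcases vcases v with hv | hv | hv <;> rw [hv]
    · have hset : {e ∈ DD' | av v.1 ∈ e} = {ac v.1, ab v.1} := by
        ext e
        constructor
        · rintro ⟨⟨m, rfl | rfl | rfl⟩, hm⟩
          · rcases mem_ac_iff.mp hm with h | h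
            · rw [av_eq_av.mp h]; exact Or.inl rfl
            · exact absurd h av_ne_cv
          · rcases mem_bc_iff.mp hm with h | h
            · exact absurd h av_ne_bv
            · exact absurd h av_ne_cv
          · rcases mem_ab_iff.mp hm with h | h
            · rw [av_eq_av.mp h]; exact Or.inr rfl
            · exact absurd h av_ne_bv
        · rintro (rfl | rfl)
          · exact ⟨⟨v.1, Or.inl rfl⟩, mem_ac_iff.mpr (Or.inl rfl)⟩
          · exact ⟨⟨v.1, Or.inr (Or.inr rfl)⟩, mem_ab_iff.mpr (Or.inl rfl)⟩
      rw [hset]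
      exact ⟨(Set.finite_singleton _).insert _, by rw [Set.ncard_pair ac_ne_ab]; exact ⟨1, rfl⟩⟩
    · have hset : {e ∈ DD' | bv v.1 ∈ e} = {bc v.1, ab v.1} := by
        ext e
        constructor
        · rintro ⟨⟨m, rfl | rfl | rfl⟩, hm⟩
          · rcases mem_ac_iff.mp hm with h | h
            · exact absurd h.symm av_ne_bv
            · exact absurd h bv_ne_cv
          · rcases mem_bc_iff.mp hm with h | h
            · rw [bv_eq_bv.mp h]; exact Or.inl rfl
            · exact absurd h bv_ne_cv
          · rcases mem_ab_iff.mp hm with h | h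
            · exact absurd h.symm av_ne_bv
            · rw [bv_eq_bv.mp h]; exact Or.inr rfl
        · rintro (rfl | rfl)
          · exact ⟨⟨v.1, Or.inr (Or.inl rfl)⟩, mem_bc_iff.mpr (Or.inl rfl)⟩
          · exact ⟨⟨v.1, Or.inr (Or.inr rfl)⟩, mem_ab_iff.mpr (Or.inr rfl)⟩
      rw [hset]
      exact ⟨(Set.finite_singleton _).insert _, by rw [Set.ncard_pair bc_ne_ab]; exact ⟨1, rfl⟩⟩
    · have hset : {e ∈ DD' | cv v.1 ∈ e} = {ac v.1, bc v.1} := by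
        ext e
        constructor
        · rintro ⟨⟨m, rfl | rfl | rfl⟩, hm⟩
          · rcases mem_ac_iff.mp hm with h | h
            · exact absurd h.symm av_ne_cv
            · rw [cv_eq_cv.mp h]; exact Or.inl rfl
          · rcases mem_bc_iff.mp hm with h | h
            · exact absurd h.symm bv_ne_cv
            · rw [cv_eq_cv.mp h]; exact Or.inr rfl
          · rcases mem_ab_iff.mp hm with h | h
            · exact absurd h.symm av_ne_cv
            · exact absurd h.symm bv_ne_cv
        · rintro (rfl | rfl)
          · exact ⟨⟨v.1, Or.inl rfl⟩, mem_ac_iff.mpr (Or.inr rfl)⟩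
          · exact ⟨⟨v.1, Or.inr (Or.inl rfl)⟩, mem_bc_iff.mpr (Or.inr rfl)⟩
      rw [hset]
      exact ⟨(Set.finite_singleton _).insert _, by rw [Set.ncard_pair ac_ne_bc]; exact ⟨1, rfl⟩⟩

end Stmt19


open Stmt19 in
/-- There are a locally finite 2-connected graph `G` and an edge set `D` having finite
even intersection with every finite circuit and with the edge set of every double ray,
but meeting some element of the algebraic cycle space infinitely. -/
theorem stmt_19 : ∃ (W : Type) (G : SimpleGraph W) (D : Set (Sym2 W)),
    (∀ x : W, (G.neighborSet x).Finite) ∧ KConnected G 2 ∧ D ⊆ G.edgeSet ∧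
    (∀ C, IsCircuit G C → EvenInter D C) ∧
    (∀ D', IsDoubleRayEdgeSet G D' → EvenInter D D') ∧
    ∃ D' ∈ CAlg G, (D ∩ D').Infinite := by
  refine ⟨W, GG, DD, nbr_finite, ⟨?_, ?_⟩, ?_, circuit_even, dray_even, DD', calg, ?_⟩
  · rw [Set.infinite_univ.encard_eq]
    exact lt_top_iff_ne_top.mpr (by simp)
  · intro S hSfin hcard
    apply connected_del
    intro x hx y hy
    exact (Set.ncard_le_one hSfin).mp (by omega) x hx y hy
  · rintro e ⟨n, rfl | rfl⟩
    · exact (SimpleGraph.mem_edgeSet GG).mpr (adj_ac n)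
    · exact (SimpleGraph.mem_edgeSet GG).mpr (adj_bc n)
  · have hsub : DD ⊆ DD' := by
      rintro e ⟨n, h | h⟩
      exacts [⟨n, Or.inl h⟩, ⟨n, Or.inr (Or.inl h)⟩]
    rw [Set.inter_eq_self_of_subset_left hsub]
    exact Set.infinite_of_injective_forall_mem ac_inj (fun n => ⟨n, Or.inl rfl⟩)
end
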